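/- arXiv:2212.08295 — 3 statements merged into one kernel-verified Lean document; each statement's English description precedes it below -/
import Mathlib

section
/- The subalgebra of C(M, ℝ) generated by the linear representations { f̂ : f ∈ C_c(W) } is dense in C(M, ℝ) with respect to the compact-open topology. Concretely: for every continuous function F : M → ℝ, every compact set K ⊆ M, and every ε > 0, there exist N ∈ ℕ, functions f_1, …, f_N ∈ C_c(W), and a polynomial p ∈ ℝ[x_1, …, x_N] such that sup_{μ ∈ K} | p(∫ f_1 dμ, …, ∫ f_N dμ) − F(μ) | < ε. -/
open Metric
open scoped NNReal


/-! Common setup: the birth-death plane, Radon measures, partial optimal transport. -/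

noncomputable section

open MeasureTheory Topology Filter Set
open scoped ENNReal

/-- The ambient plane `ℝ²` (with the sup-norm, i.e. `q = ∞`). -/
abbrev P2 : Type := ℝ × ℝ

/-- The birth-death plane `W = {(b,d) : b < d}`. -/
def Wbd : Set P2 := {p | p.1 < p.2}

/-- The closure `W̄` of the birth-death plane. -/
def Wcl : Set P2 := closure Wbd

/-- The diagonal `Δ`. -/
def Diag : Set P2 := {p | p.1 = p.2}

/-- Distance from a point to the diagonal, `‖x - Δ‖`. -/
def distDiag (x : P2) : ℝ := Metric.infDist x Diag

/-- The pseudometric `d(x,y) = min(‖x-y‖, ‖x-Δ‖ + ‖y-Δ‖)` on `W̄`. -/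
def dW (x y : P2) : ℝ := min (dist x y) (distDiag x + distDiag y)

/-- The support of a Borel measure: points all of whose neighborhoods have
positive measure. -/
def msupport {α : Type*} [TopologicalSpace α] [MeasurableSpace α] (μ : Measure α) : Set α :=
  {x | ∀ U ∈ 𝓝 x, 0 < μ U}

/-- `μ` is a Radon measure on the subspace `S`: it vanishes off `S`, is inner regular
(on relatively open sets) by compact sets, outer regular (by relatively open sets), and finite
on compact subsets of `S`. -/
def RadonOn {α : Type*} [TopologicalSpace α] [MeasurableSpace α] (S : Set α)
    (μ : Measure α) : Prop :=
  μ Sᶜ = 0 ∧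
  (∀ U : Set α, IsOpen U → μ (U ∩ S) = ⨆ (K : Set α) (_ : K ⊆ U ∩ S) (_ : IsCompact K), μ K) ∧
  (∀ E : Set α, E ⊆ S → MeasurableSet E →
    μ E = ⨅ (U : Set α) (_ : IsOpen U) (_ : E ⊆ U), μ (U ∩ S)) ∧
  (∀ K : Set α, K ⊆ S → IsCompact K → μ K < ⊤)

/-- The set `M` of Radon measures on `W`. -/
def MRadon : Set (Measure P2) := {μ | RadonOn Wbd μ}

/-- `pers_∞(μ) = sup{‖x-Δ‖ : x ∈ spt μ}` (valued in `ℝ≥0∞`). -/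
def persInf (μ : Measure P2) : ℝ≥0∞ := ⨆ x ∈ msupport μ, ENNReal.ofReal (distDiag x)

/-- The space `M^∞` of Radon measures on `W` with finite `∞`-persistence. -/
def MInf : Set (Measure P2) := {μ | RadonOn Wbd μ ∧ persInf μ < ⊤}

/-- A coupling (admissible transport plan) between `μ` and `ν`: a Radon measure on
`W̄ × W̄` whose marginals restricted to Borel subsets of `W` are `μ` and `ν`. -/
def IsCoupling (π : Measure (P2 × P2)) (μ ν : Measure P2) : Prop :=
  RadonOn (Wcl ×ˢ Wcl) π ∧
  (∀ A : Set P2, A ⊆ Wbd → MeasurableSet A → π (A ×ˢ Wcl) = μ A) ∧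
  (∀ B : Set P2, B ⊆ Wbd → MeasurableSet B → π (Wcl ×ˢ B) = ν B)

/-- The `∞`-cost of a transport plan: `sup {d(x,y) : (x,y) ∈ spt π}`. -/
def costInf (π : Measure (P2 × P2)) : ℝ≥0∞ :=
  ⨆ p ∈ msupport π, ENNReal.ofReal (dW p.1 p.2)

/-- The partial `∞`-optimal transport distance. -/
def OT (μ ν : Measure P2) : ℝ≥0∞ :=
  ⨅ (π : Measure (P2 × P2)) (_ : IsCoupling π μ ν), costInf π

/-- `W_ε = {(x,y) : y - x > ε}`. -/
def Weps (ε : ℝ) : Set P2 := {p | p.2 - p.1 > ε}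

/-- The space `M_f^∞` of off-diagonally finite measures. -/
def Mf : Set (Measure P2) := {μ | μ ∈ MInf ∧ ∀ ε : ℝ, 0 < ε → μ (Weps ε) < ⊤}

/-- The space `M_fin^∞` of finite measures in `M^∞`. -/
def Mfin : Set (Measure P2) := {μ | μ ∈ MInf ∧ μ Wbd < ⊤}

/-- `f ∈ C_c(W)`: a continuous function, compactly supported, with support contained
in the open set `W` (extended by zero to the plane). -/
def IsCcW (f : P2 → ℝ) : Prop :=
  Continuous f ∧ HasCompactSupport f ∧ tsupport f ⊆ Wbd

/-- Convergence of a sequence of measures to `μ` in the distance `OT_∞`. -/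
def OTConv (u : ℕ → Measure P2) (μ : Measure P2) : Prop :=
  Tendsto (fun n => OT (u n) μ) atTop (𝓝 0)

/-- Sequential continuity of `F : M → ℝ` on a subset `T` of the space of measures with
the (extended pseudo-)metric `OT_∞`; in a metric space this is equivalent to continuity. -/
def SeqContinuousOn (F : Measure P2 → ℝ) (T : Set (Measure P2)) : Prop :=
  ∀ μ ∈ T, ∀ u : ℕ → Measure P2, (∀ n, u n ∈ T) →
    Tendsto (fun n => OT (u n) μ) atTop (𝓝 0) →
    Tendsto (fun n => F (u n)) atTop (𝓝 (F μ))

/-- `K` is a (sequentially) compact subset with respect to `OT_∞`; in a metric space this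
is equivalent to compactness. -/
def SeqCompactOT (K : Set (Measure P2)) : Prop :=
  ∀ u : ℕ → Measure P2, (∀ n, u n ∈ K) →
    ∃ μ ∈ K, ∃ φ : ℕ → ℕ, StrictMono φ ∧ Tendsto (fun n => OT (u (φ n)) μ) atTop (𝓝 0)

-- basic geometry
lemma isOpen_Wbd : IsOpen Wbd := isOpen_lt continuous_fst continuous_snd
lemma measurableSet_Wbd : MeasurableSet Wbd := isOpen_Wbd.measurableSet
lemma isClosed_Wcl : IsClosed Wcl := isClosed_closure
lemma measurableSet_Wcl : MeasurableSet Wcl := isClosed_Wcl.measurableSet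
lemma isClosed_Diag : IsClosed Diag := isClosed_eq continuous_fst continuous_snd
lemma Diag_nonempty : Diag.Nonempty := ⟨(0,0), rfl⟩
lemma Wcl_subset : Wcl ⊆ {p : P2 | p.1 ≤ p.2} := by
  apply closure_minimal _ (isClosed_le continuous_fst continuous_snd)
  intro p hp; exact le_of_lt (show p.1 < p.2 from hp)
lemma not_mem_Diag_of_Wbd {x : P2} (hx : x ∈ Wbd) : x ∉ Diag := fun h => absurd h (ne_of_lt hx)
lemma distDiag_pos_of_Wbd {x : P2} (hx : x ∈ Wbd) : 0 < distDiag x :=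
  (IsClosed.notMem_iff_infDist_pos isClosed_Diag Diag_nonempty).1 (not_mem_Diag_of_Wbd hx)
lemma mem_Wbd_of_Wcl {y : P2} (hy : y ∈ Wcl) (hd : 0 < distDiag y) : y ∈ Wbd := by
  have h1 : y.1 ≤ y.2 := Wcl_subset hy
  rcases lt_or_eq_of_le h1 with h | h
  · exact h
  · exfalso
    have : y ∈ Diag := h
    simp [distDiag, Metric.infDist_zero_of_mem this] at hd
lemma dW_nonneg (x y : P2) : 0 ≤ dW x y :=
  le_min dist_nonneg (add_nonneg Metric.infDist_nonneg Metric.infDist_nonneg)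

-- bump functions
def bump0 (c : P2) (r s : ℝ) : P2 → ℝ :=
  fun x => max 0 (min 1 ((s - dist x c) / (s - r)))

lemma bump0_continuous (c : P2) (r s : ℝ) : Continuous (bump0 c r s) := by
  apply continuous_const.max (continuous_const.min _)
  exact (continuous_const.sub (continuous_id.dist continuous_const)).div_const _
lemma bump0_nonneg (c r s x) : 0 ≤ bump0 c r s x := le_max_left _ _
lemma bump0_le_one (c r s x) : bump0 c r s x ≤ 1 := max_le zero_le_one (min_le_left _ _)
lemma bump0_eq_one {c : P2} {r s : ℝ} (hr : r < s) {x : P2} (hx : x ∈ closedBall c r) :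
    bump0 c r s x = 1 := by
  have hrs : 0 < s - r := by linarith
  have h1 : (1:ℝ) ≤ (s - dist x c) / (s - r) := by
    rw [le_div_iff₀ hrs]
    have := mem_closedBall.1 hx
    linarith
  simp only [bump0, min_eq_left h1]
  exact max_eq_right zero_le_one
lemma bump0_support {c : P2} {r s : ℝ} (hr : r < s) {x : P2} (hx : x ∉ closedBall c s) :
    bump0 c r s x = 0 := by
  have hd : s < dist x c := by simpa [mem_closedBall, not_le] using hx
  have hrs : 0 < s - r := by linarith
  have : (s - dist x c) / (s - r) ≤ 0 := div_nonpos_of_nonpos_of_nonneg (by linarith) hrs.le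
  have : min 1 ((s - dist x c) / (s - r)) ≤ 0 := le_trans (min_le_right _ _) this
  simp [bump0, max_eq_left this]
-- continuing (appended to part1 when testing)

abbrev Q4 : Type := ℚ × ℚ × ℚ × ℚ

def qc (t : Q4) : P2 := ((t.1 : ℝ), (t.2.1 : ℝ))

open scoped Classical in
def bump (t : Q4) : P2 → ℝ :=
  if (0:ℝ) < (t.2.2.1 : ℝ) ∧ (t.2.2.1 : ℝ) < (t.2.2.2 : ℝ) ∧
      closedBall (qc t) (t.2.2.2 : ℝ) ⊆ Wbd
  then bump0 (qc t) (t.2.2.1 : ℝ) (t.2.2.2 : ℝ) else 0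

lemma bump_cases (t : Q4) : bump t = 0 ∨
    ∃ c : P2, ∃ r s : ℝ, 0 < r ∧ r < s ∧ closedBall c s ⊆ Wbd ∧ bump t = bump0 c r s := by
  classical
  by_cases h : (0:ℝ) < (t.2.2.1 : ℝ) ∧ (t.2.2.1 : ℝ) < (t.2.2.2 : ℝ) ∧
      closedBall (qc t) (t.2.2.2 : ℝ) ⊆ Wbd
  · exact Or.inr ⟨qc t, _, _, h.1, h.2.1, h.2.2, if_pos h⟩
  · exact Or.inl (if_neg h)

lemma bump_nonneg (t : Q4) (x : P2) : 0 ≤ bump t x := by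
  rcases bump_cases t with h | ⟨c, r, s, _, _, _, h⟩ <;> rw [h]
  · exact le_refl 0
  · exact bump0_nonneg _ _ _ _
lemma bump_le_one (t : Q4) (x : P2) : bump t x ≤ 1 := by
  rcases bump_cases t with h | ⟨c, r, s, _, _, _, h⟩ <;> rw [h]
  · exact zero_le_one
  · exact bump0_le_one _ _ _ _
lemma bump_continuous (t : Q4) : Continuous (bump t) := by
  rcases bump_cases t with h | ⟨c, r, s, _, _, _, h⟩ <;> rw [h]
  · exact continuous_const
  · exact bump0_continuous _ _ _
lemma bump_tsupport (t : Q4) : tsupport (bump t) ⊆ Wbd ∧ IsCompact (tsupport (bump t)) := by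
  rcases bump_cases t with h | ⟨c, r, s, hr, hrs, hball, h⟩ <;> rw [h]
  · constructor
    · simp [tsupport, Function.support]
    · show IsCompact (tsupport (0 : P2 → ℝ))
      have : tsupport (0 : P2 → ℝ) = ∅ := by
        simp [tsupport, Function.support]
      rw [this]; exact isCompact_empty
  · have hsub : tsupport (bump0 c r s) ⊆ closedBall c s := by
      apply closure_minimal _ isClosed_closedBall
      intro x hx
      by_contra hxb
      exact hx (bump0_support hrs hxb)
    refine ⟨hsub.trans hball, ?_⟩
    exact (isCompact_closedBall c s).of_isClosed_subset (isClosed_tsupport _) hsub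
lemma bump_hcs (t : Q4) : HasCompactSupport (bump t) := (bump_tsupport t).2

-- list max family
lemma gfam_eq_zero' : ∀ (T : List Q4) (x : P2), (∀ t ∈ T, bump t x = 0) →
    (T.map (fun t => bump t x)).foldr max 0 = 0 := by
  intro T x h
  induction T with
  | nil => rfl
  | cons a T ih =>
    simp only [List.map_cons, List.foldr_cons, h a (List.mem_cons_self),
      ih (fun t ht => h t (List.mem_cons_of_mem a ht))]
    simp
def gfam (T : List Q4) : P2 → ℝ := fun x => (T.map (fun t => bump t x)).foldr max 0

lemma gfam_nil (x : P2) : gfam [] x = 0 := rfl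
lemma gfam_cons (t : Q4) (T : List Q4) (x : P2) :
    gfam (t :: T) x = max (bump t x) (gfam T x) := rfl

lemma gfam_nonneg (T : List Q4) (x : P2) : 0 ≤ gfam T x := by
  induction T with
  | nil => exact le_refl 0
  | cons t T ih => rw [gfam_cons]; exact le_trans ih (le_max_right _ _)
lemma gfam_le_one (T : List Q4) (x : P2) : gfam T x ≤ 1 := by
  induction T with
  | nil => exact zero_le_one
  | cons t T ih => rw [gfam_cons]; exact max_le (bump_le_one t x) ih
lemma le_gfam {t : Q4} {T : List Q4} (ht : t ∈ T) (x : P2) : bump t x ≤ gfam T x := by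
  induction T with
  | nil => simp at ht
  | cons a T ih =>
    rw [gfam_cons]
    rcases List.mem_cons.1 ht with h | h
    · rw [h]; exact le_max_left _ _
    · exact le_trans (ih h) (le_max_right _ _)
lemma gfam_continuous (T : List Q4) : Continuous (gfam T) := by
  induction T with
  | nil => exact continuous_const
  | cons t T ih =>
    have : gfam (t :: T) = fun x => max (bump t x) (gfam T x) := rfl
    rw [this]; exact (bump_continuous t).max ih
lemma gfam_support (T : List Q4) : tsupport (gfam T) ⊆ ⋃ t ∈ T, tsupport (bump t) := by
  apply closure_minimal
  · intro x hx
    have : ∃ t ∈ T, bump t x ≠ 0 := by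
      by_contra hc
      push_neg at hc
      exact hx (gfam_eq_zero' T x hc)
    obtain ⟨t, htT, ht⟩ := this
    exact Set.mem_biUnion htT (subset_closure ht)
  · apply Set.Finite.isClosed_biUnion (T.finite_toSet)
    intro t _; exact isClosed_tsupport _
lemma gfam_IsCcW (T : List Q4) : IsCcW (gfam T) := by
  refine ⟨gfam_continuous T, ?_, ?_⟩
  · apply IsCompact.of_isClosed_subset ?_ (isClosed_tsupport _) (gfam_support T)
    exact T.finite_toSet.isCompact_biUnion (fun t _ => (bump_tsupport t).2)
  · exact (gfam_support T).trans (Set.iUnion₂_subset fun t _ => (bump_tsupport t).1)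
lemma bump0_tsupport {c : P2} {r s : ℝ} (hrs : r < s) :
    tsupport (bump0 c r s) ⊆ closedBall c s := by
  apply closure_minimal _ isClosed_closedBall
  intro x hx
  by_contra hxb
  exact hx (bump0_support hrs hxb)

lemma exists_point_bump {V : Set P2} (hV : IsOpen V) (hVW : V ⊆ Wbd) {x : P2} (hx : x ∈ V) :
    ∃ t : Q4, ∃ N : Set P2, IsOpen N ∧ x ∈ N ∧ (∀ y ∈ N, bump t y = 1) ∧
      tsupport (bump t) ⊆ V := by
  classical
  obtain ⟨ρ, hρ, hball⟩ := Metric.isOpen_iff.1 hV x hx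
  obtain ⟨a, ha⟩ := exists_rat_near x.1 (show (0:ℝ) < ρ/8 by linarith)
  obtain ⟨b, hb⟩ := exists_rat_near x.2 (show (0:ℝ) < ρ/8 by linarith)
  obtain ⟨r, hr1, hr2⟩ := exists_rat_btwn (show (ρ/8 : ℝ) < ρ/4 by linarith)
  obtain ⟨s, hs1, hs2⟩ := exists_rat_btwn (show (ρ/4 : ℝ) < ρ/2 by linarith)
  set t : Q4 := (a, b, r, s) with ht
  have hqc : qc t = ((a:ℝ), (b:ℝ)) := rfl
  have hdxc : dist x (qc t) < ρ/8 := by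
    rw [hqc, Prod.dist_eq]
    apply max_lt
    · rw [Real.dist_eq]; exact ha
    · rw [Real.dist_eq]; exact hb
  have hrpos : (0:ℝ) < (r:ℝ) := lt_trans (by linarith) hr1
  have hrs : (r:ℝ) < (s:ℝ) := lt_trans hr2 hs1
  have hsub : closedBall (qc t) (s:ℝ) ⊆ V := by
    intro y hy
    apply hball
    have h1 : dist y (qc t) ≤ (s:ℝ) := mem_closedBall.1 hy
    have h2 : dist y x ≤ dist y (qc t) + dist (qc t) x := dist_triangle _ _ _
    rw [dist_comm (qc t) x] at h2
    exact mem_ball.2 (lt_of_le_of_lt h2 (by linarith))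
  have hvalid : (0:ℝ) < (t.2.2.1 : ℝ) ∧ (t.2.2.1 : ℝ) < (t.2.2.2 : ℝ) ∧
      closedBall (qc t) (t.2.2.2 : ℝ) ⊆ Wbd := ⟨hrpos, hrs, hsub.trans hVW⟩
  have hbump : bump t = bump0 (qc t) (r:ℝ) (s:ℝ) := if_pos hvalid
  refine ⟨t, ball (qc t) (r:ℝ), isOpen_ball, mem_ball.2 (by linarith), ?_, ?_⟩
  · intro y hy
    rw [hbump]
    exact bump0_eq_one hrs (ball_subset_closedBall hy)
  · rw [hbump]
    exact (bump0_tsupport hrs).trans hsub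

lemma exists_gfam {K' V : Set P2} (hK : IsCompact K') (hV : IsOpen V) (hVW : V ⊆ Wbd)
    (hKV : K' ⊆ V) : ∃ T : List Q4, (∀ x ∈ K', gfam T x = 1) ∧ tsupport (gfam T) ⊆ V := by
  choose tq N hNopen hxN hNone hTs using
    fun (x : P2) (hx : x ∈ K') => exists_point_bump hV hVW (hKV hx)
  obtain ⟨Fs, hFs⟩ := hK.elim_nhds_subcover' (fun x hx => N x hx)
    (fun x hx => (hNopen x hx).mem_nhds (hxN x hx))
  refine ⟨Fs.toList.map (fun z => tq z.1 z.2), ?_, ?_⟩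
  · intro x hx
    obtain ⟨z, hz⟩ := Set.mem_iUnion.1 (hFs hx)
    obtain ⟨hzF, hxz⟩ := Set.mem_iUnion.1 hz
    refine le_antisymm (gfam_le_one _ _) ?_
    have hmem : tq z.1 z.2 ∈ Fs.toList.map (fun z => tq z.1 z.2) :=
      List.mem_map.2 ⟨z, Finset.mem_toList.2 hzF, rfl⟩
    calc (1:ℝ) = bump (tq z.1 z.2) x := (hNone z.1 z.2 x hxz).symm
    _ ≤ _ := le_gfam hmem x
  · refine (gfam_support _).trans (Set.iUnion₂_subset ?_)
    intro t htmem
    obtain ⟨z, _, rfl⟩ := List.mem_map.1 htmem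
    exact hTs z.1 z.2

-- integration helpers
lemma integrable_of_bound {α : Type*} [MeasurableSpace α] {π : Measure α} {g : α → ℝ}
    (hmeas : AEStronglyMeasurable g π) {V : Set α} (hV : MeasurableSet V) (hfin : π V < ⊤)
    {C : ℝ} (hb : ∀ x, ‖g x‖ ≤ V.indicator (fun _ => C) x) : Integrable g π := by
  refine ⟨hmeas, ?_⟩
  have hpt : ∀ x, (‖g x‖₊ : ℝ≥0∞) ≤ V.indicator (fun _ => ENNReal.ofReal C) x := by
    intro x
    have h1 : (‖g x‖₊ : ℝ≥0∞) = ENNReal.ofReal ‖g x‖ := (ofReal_norm _).symm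
    by_cases hx : x ∈ V
    · rw [Set.indicator_of_mem hx, h1]
      exact ENNReal.ofReal_le_ofReal (by simpa [Set.indicator_of_mem hx] using hb x)
    · rw [Set.indicator_of_notMem hx, h1]
      have := hb x
      rw [Set.indicator_of_notMem hx] at this
      simp [le_antisymm this (norm_nonneg _)]
  have : HasFiniteIntegral g π := by
    rw [HasFiniteIntegral]
    calc ∫⁻ x, ‖g x‖₊ ∂π ≤ ∫⁻ x, V.indicator (fun _ => ENNReal.ofReal C) x ∂π :=
          lintegral_mono hpt
    _ = ENNReal.ofReal C * π V := by
          rw [lintegral_indicator hV, setLIntegral_const]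
    _ < ⊤ := ENNReal.mul_lt_top ENNReal.ofReal_lt_top hfin
  exact this

lemma integrable_cc {f : P2 → ℝ} (hfc : Continuous f) (hfs : HasCompactSupport f)
    {μ : Measure P2} (hfin : μ (tsupport f) < ⊤) : Integrable f μ := by
  obtain ⟨C, hC⟩ := hfs.exists_bound_of_continuous hfc
  apply integrable_of_bound hfc.aestronglyMeasurable (isClosed_tsupport f).measurableSet hfin
    (C := C)
  intro x
  by_cases hx : x ∈ tsupport f
  · rw [Set.indicator_of_mem hx]; exact hC x
  · rw [Set.indicator_of_notMem hx, image_eq_zero_of_notMem_tsupport hx]; simp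
lemma radon_inter_Wbd {μ : Measure P2} (h : RadonOn Wbd μ) (E : Set P2) : μ E = μ (E ∩ Wbd) := by
  refine le_antisymm ?_ (measure_mono inter_subset_left)
  calc μ E ≤ μ ((E ∩ Wbd) ∪ Wbdᶜ) := measure_mono (fun x hx => by
        by_cases h : x ∈ Wbd
        exacts [Or.inl ⟨hx, h⟩, Or.inr h])
  _ ≤ μ (E ∩ Wbd) + μ Wbdᶜ := measure_union_le _ _
  _ = μ (E ∩ Wbd) := by rw [h.1, add_zero]

lemma measure_open_le {μ ν : Measure P2} (hμ : RadonOn Wbd μ) (hν : RadonOn Wbd ν)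
    (h : ∀ T : List Q4, ∫ x, gfam T x ∂μ = ∫ x, gfam T x ∂ν) (U : Set P2) (hU : IsOpen U) :
    μ (U ∩ Wbd) ≤ ν (U ∩ Wbd) := by
  rw [hμ.2.1 U hU]
  refine iSup_le fun K' => iSup_le fun hK'U => iSup_le fun hK'c => ?_
  by_cases hinf : ν (U ∩ Wbd) = ⊤
  · rw [hinf]; exact le_top
  obtain ⟨T, hT1, hTs⟩ := exists_gfam hK'c (hU.inter isOpen_Wbd) inter_subset_right hK'U
  set g := gfam T with hg
  have hgI : IsCcW g := gfam_IsCcW T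
  have hLW : tsupport g ⊆ Wbd := hgI.2.2
  have hμL : μ (tsupport g) < ⊤ := hμ.2.2.2 _ hLW hgI.2.1
  have hνL : ν (tsupport g) < ⊤ := hν.2.2.2 _ hLW hgI.2.1
  have hμK' : μ K' < ⊤ := hμ.2.2.2 K' (hK'U.trans inter_subset_right) hK'c
  have hgint : Integrable g μ := integrable_cc hgI.1 hgI.2.1 hμL
  have hgintν : Integrable g ν := integrable_cc hgI.1 hgI.2.1 hνL
  have h1 : (μ K').toReal ≤ ∫ x, g x ∂μ := by
    have hind : Integrable (K'.indicator (fun _ => (1:ℝ))) μ :=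
      (integrable_indicator_iff hK'c.measurableSet).2 (integrableOn_const hμK'.ne)
    have hmono : ∫ x, (K'.indicator (fun _ => (1:ℝ))) x ∂μ ≤ ∫ x, g x ∂μ := by
      refine integral_mono hind hgint fun x => ?_
      by_cases hx : x ∈ K'
      · rw [Set.indicator_of_mem hx]; exact (hT1 x hx).ge
      · rw [Set.indicator_of_notMem hx]; exact gfam_nonneg T x
    rwa [integral_indicator_const _ hK'c.measurableSet, smul_eq_mul, mul_one] at hmono
  have h2 : ∫ x, g x ∂ν ≤ (ν (U ∩ Wbd)).toReal := by
    have hind : Integrable ((tsupport g).indicator (fun _ => (1:ℝ))) ν :=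
      (integrable_indicator_iff (isClosed_tsupport g).measurableSet).2
        (integrableOn_const hνL.ne)
    have hs : ∫ x, g x ∂ν ≤ ∫ x, ((tsupport g).indicator (fun _ => (1:ℝ))) x ∂ν := by
      refine integral_mono hgintν hind fun x => ?_
      by_cases hx : x ∈ tsupport g
      · rw [Set.indicator_of_mem hx]; exact gfam_le_one T x
      · rw [Set.indicator_of_notMem hx, image_eq_zero_of_notMem_tsupport hx]
    rw [integral_indicator_const _ (isClosed_tsupport g).measurableSet, smul_eq_mul,
      mul_one] at hs
    exact hs.trans (ENNReal.toReal_mono hinf (measure_mono hTs))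
  have hfin : (μ K').toReal ≤ (ν (U ∩ Wbd)).toReal := by
    refine h1.trans ?_
    rw [h T]
    exact h2
  exact (ENNReal.toReal_le_toReal hμK'.ne hinf).1 hfin

lemma measure_eq_of_integrals {μ ν : Measure P2} (hμ : RadonOn Wbd μ) (hν : RadonOn Wbd ν)
    (h : ∀ T : List Q4, ∫ x, gfam T x ∂μ = ∫ x, gfam T x ∂ν) : μ = ν := by
  have hopen : ∀ U, IsOpen U → μ (U ∩ Wbd) = ν (U ∩ Wbd) := fun U hU =>
    le_antisymm (measure_open_le hμ hν h U hU)
      (measure_open_le hν hμ (fun T => (h T).symm) U hU)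
  apply Measure.ext
  intro E hE
  rw [radon_inter_Wbd hμ E, radon_inter_Wbd hν E,
    hμ.2.2.1 (E ∩ Wbd) inter_subset_right (hE.inter measurableSet_Wbd),
    hν.2.2.1 (E ∩ Wbd) inter_subset_right (hE.inter measurableSet_Wbd)]
  exact iInf_congr fun U => iInf_congr fun hU => iInf_congr fun _ => hopen U hU
-- msupport lemmas
lemma isClosed_msupport {α : Type*} [TopologicalSpace α] [MeasurableSpace α] (μ : Measure α) :
    IsClosed (msupport μ) := by
  rw [← isOpen_compl_iff, isOpen_iff_mem_nhds]
  intro x hx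
  simp only [mem_compl_iff, msupport, mem_setOf_eq, not_forall, Classical.not_imp] at hx
  obtain ⟨U, hU, hU0⟩ := hx
  obtain ⟨V, hVU, hVopen, hxV⟩ := mem_nhds_iff.1 hU
  refine Filter.mem_of_superset (hVopen.mem_nhds hxV) fun y hy => ?_
  simp only [mem_compl_iff, msupport, mem_setOf_eq, not_forall, Classical.not_imp]
  exact ⟨V, hVopen.mem_nhds hy, fun hlt => hU0 (hlt.trans_le (measure_mono hVU))⟩

lemma radon_msupport {α : Type*} [TopologicalSpace α] [MeasurableSpace α] {S : Set α}
    {π : Measure α} (h : RadonOn S π) : π ((msupport π)ᶜ) = 0 := by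
  classical
  have hopen : IsOpen (msupport π)ᶜ := (isClosed_msupport π).isOpen_compl
  have hzero : π ((msupport π)ᶜ ∩ S) = 0 := by
    rw [h.2.1 _ hopen]
    refine le_antisymm (iSup_le fun Kc => iSup_le fun hKs => iSup_le fun hKc => ?_) zero_le
    set U : α → Set α := fun z => if hz : ∃ t, t ∈ 𝓝 z ∧ π t = 0 then hz.choose else univ with hU
    have hUspec : ∀ z ∈ Kc, U z ∈ 𝓝 z ∧ π (U z) = 0 := by
      intro z hz
      have hz2 : z ∉ msupport π := (hKs hz).1
      simp only [msupport, mem_setOf_eq, not_forall, Classical.not_imp] at hz2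
      obtain ⟨t, ht, ht0⟩ := hz2
      have hex : ∃ t, t ∈ 𝓝 z ∧ π t = 0 := ⟨t, ht, le_zero_iff.1 (not_lt.1 ht0)⟩
      rw [hU]
      simp only [dif_pos hex]
      exact hex.choose_spec
    obtain ⟨F, hFmem, hF⟩ := hKc.elim_nhds_subcover U (fun z hz => (hUspec z hz).1)
    calc π Kc ≤ π (⋃ z ∈ F, U z) := measure_mono hF
    _ ≤ ∑ z ∈ F, π (U z) := measure_biUnion_finset_le F U
    _ ≤ 0 := le_of_eq (Finset.sum_eq_zero fun z hz => (hUspec z (hFmem z hz)).2)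
  refine le_antisymm ?_ zero_le
  calc π ((msupport π)ᶜ) ≤ π (((msupport π)ᶜ ∩ S) ∪ Sᶜ) := measure_mono (fun x hx => by
        by_cases hxS : x ∈ S
        exacts [Or.inl ⟨hx, hxS⟩, Or.inr hxS])
  _ ≤ π ((msupport π)ᶜ ∩ S) + π Sᶜ := measure_union_le _ _
  _ ≤ 0 := by rw [hzero, h.1, add_zero]

-- coupling marginals
lemma coupling_prod_univ {π : Measure (P2 × P2)} (hπ0 : π ((Wcl ×ˢ Wcl)ᶜ) = 0) (A : Set P2) :
    π (A ×ˢ (univ : Set P2)) = π (A ×ˢ Wcl) := by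
  refine le_antisymm ?_ (measure_mono (prod_mono_right (subset_univ _)))
  calc π (A ×ˢ (univ : Set P2)) ≤ π ((A ×ˢ Wcl) ∪ (Wcl ×ˢ Wcl)ᶜ) := measure_mono (fun p hp => by
        by_cases h2 : p.2 ∈ Wcl
        · exact Or.inl ⟨hp.1, h2⟩
        · exact Or.inr fun hc => h2 hc.2)
  _ ≤ π (A ×ˢ Wcl) + π ((Wcl ×ˢ Wcl)ᶜ) := measure_union_le _ _
  _ = π (A ×ˢ Wcl) := by rw [hπ0, add_zero]

lemma coupling_univ_prod {π : Measure (P2 × P2)} (hπ0 : π ((Wcl ×ˢ Wcl)ᶜ) = 0) (B : Set P2) :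
    π ((univ : Set P2) ×ˢ B) = π (Wcl ×ˢ B) := by
  refine le_antisymm ?_ (measure_mono (prod_mono_left (subset_univ _)))
  calc π ((univ : Set P2) ×ˢ B) ≤ π ((Wcl ×ˢ B) ∪ (Wcl ×ˢ Wcl)ᶜ) := measure_mono (fun p hp => by
        by_cases h1 : p.1 ∈ Wcl
        · exact Or.inl ⟨h1, hp.2⟩
        · exact Or.inr fun hc => h1 hc.1)
  _ ≤ π (Wcl ×ˢ B) + π ((Wcl ×ˢ Wcl)ᶜ) := measure_union_le _ _
  _ = π (Wcl ×ˢ B) := by rw [hπ0, add_zero]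

lemma integral_eq_of_agree {ν m : Measure P2} {f : P2 → ℝ} (hfc : Continuous f)
    (hsupp : tsupport f ⊆ Wbd)
    (h : ∀ A : Set P2, MeasurableSet A → A ⊆ Wbd → ν A = m A) :
    ∫ x, f x ∂ν = ∫ x, f x ∂m := by
  have hL : MeasurableSet (tsupport f) := (isClosed_tsupport f).measurableSet
  have hind : f = (tsupport f).indicator f := by
    funext x
    by_cases hx : x ∈ tsupport f
    · rw [Set.indicator_of_mem hx]
    · rw [Set.indicator_of_notMem hx, image_eq_zero_of_notMem_tsupport hx]
  have hres : ν.restrict (tsupport f) = m.restrict (tsupport f) := by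
    apply Measure.ext; intro A hA
    rw [Measure.restrict_apply hA, Measure.restrict_apply hA,
      h _ (hA.inter hL) (inter_subset_right.trans hsupp)]
  calc ∫ x, f x ∂ν = ∫ x, (tsupport f).indicator f x ∂ν := by rw [← hind]
  _ = ∫ x in tsupport f, f x ∂ν := integral_indicator hL
  _ = ∫ x in tsupport f, f x ∂m := by rw [hres]
  _ = ∫ x, (tsupport f).indicator f x ∂m := (integral_indicator hL).symm
  _ = ∫ x, f x ∂m := by rw [← hind]

lemma integral_fst_eq {π : Measure (P2 × P2)} {m : Measure P2}
    (hπ0 : π ((Wcl ×ˢ Wcl)ᶜ) = 0)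
    (hm : ∀ A : Set P2, A ⊆ Wbd → MeasurableSet A → π (A ×ˢ Wcl) = m A)
    {f : P2 → ℝ} (hfc : Continuous f) (hsupp : tsupport f ⊆ Wbd) :
    ∫ p, f p.1 ∂π = ∫ x, f x ∂m := by
  have h1 : ∫ p, f p.1 ∂π = ∫ x, f x ∂(π.map Prod.fst) :=
    (integral_map measurable_fst.aemeasurable hfc.aestronglyMeasurable).symm
  rw [h1]
  refine integral_eq_of_agree hfc hsupp fun A hA hAW => ?_
  rw [Measure.map_apply measurable_fst hA]
  have hpre : Prod.fst ⁻¹' A = A ×ˢ (univ : Set P2) := by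
    ext p; simp [Set.mem_prod]
  rw [hpre, coupling_prod_univ hπ0, hm A hAW hA]

lemma integral_snd_eq {π : Measure (P2 × P2)} {μ : Measure P2}
    (hπ0 : π ((Wcl ×ˢ Wcl)ᶜ) = 0)
    (hμ : ∀ B : Set P2, B ⊆ Wbd → MeasurableSet B → π (Wcl ×ˢ B) = μ B)
    {f : P2 → ℝ} (hfc : Continuous f) (hsupp : tsupport f ⊆ Wbd) :
    ∫ p, f p.2 ∂π = ∫ x, f x ∂μ := by
  have h1 : ∫ p, f p.2 ∂π = ∫ x, f x ∂(π.map Prod.snd) :=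
    (integral_map measurable_snd.aemeasurable hfc.aestronglyMeasurable).symm
  rw [h1]
  refine integral_eq_of_agree hfc hsupp fun B hB hBW => ?_
  rw [Measure.map_apply measurable_snd hB]
  have hpre : Prod.snd ⁻¹' B = (univ : Set P2) ×ˢ B := by
    ext p; simp [Set.mem_prod]
  rw [hpre, coupling_univ_prod hπ0, hμ B hBW hB]
lemma cthick_distDiag {L : Set P2} (hLne : L.Nonempty) {δ₂ : ℝ} (hδ₂ : 0 ≤ δ₂)
    (hL : ∀ x ∈ L, 2*δ₂ ≤ distDiag x) {y : P2} (hy : y ∈ cthickening δ₂ L) :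
    δ₂ ≤ distDiag y := by
  have h1 : infDist y L ≤ δ₂ := by
    rw [mem_cthickening_iff] at hy
    have := ENNReal.toReal_mono (by simp) hy
    rwa [ENNReal.toReal_ofReal hδ₂, ← Metric.infDist] at this
  have h2 : 2*δ₂ - distDiag y ≤ infDist y L := by
    by_contra hcon
    push_neg at hcon
    obtain ⟨x, hxL, hxd⟩ := (Metric.infDist_lt_iff hLne).1 hcon
    have h3 : distDiag x ≤ distDiag y + dist x y := Metric.infDist_le_infDist_add_dist
    have h4 := hL x hxL
    rw [dist_comm] at hxd
    linarith
  linarith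

lemma key_est {f : P2 → ℝ} (hfc : Continuous f) (hfs : HasCompactSupport f)
    (hsupp : tsupport f ⊆ Wbd) (hLne : (tsupport f).Nonempty)
    {m μ : Measure P2} (hm : RadonOn Wbd m) (hμ : RadonOn Wbd μ)
    {π : Measure (P2 × P2)} (hπ : IsCoupling π m μ)
    {δ ε' δ₂ : ℝ} (hδpos : 0 < δ) (hδ2 : δ ≤ δ₂) (hδ2pos : 0 < δ₂)
    (hL : ∀ x ∈ tsupport f, 2*δ₂ ≤ distDiag x)
    (hmod : ∀ a b : P2, dist a b < δ → |f a - f b| ≤ ε') (hε' : 0 ≤ ε')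
    (hcost : costInf π < ENNReal.ofReal δ) :
    |∫ x, f x ∂m - ∫ x, f x ∂μ| ≤ ε' * (μ (cthickening δ₂ (tsupport f) ∩ Wcl)).toReal := by
  set L := tsupport f with hLdef
  set B := cthickening δ₂ L ∩ Wcl with hBdef
  have hπ0 : π ((Wcl ×ˢ Wcl)ᶜ) = 0 := hπ.1.1
  have hLmeas : MeasurableSet L := (isClosed_tsupport f).measurableSet
  have hBsub : B ⊆ Wbd := fun y hy =>
    mem_Wbd_of_Wcl hy.2 (lt_of_lt_of_le hδ2pos (cthick_distDiag hLne hδ2pos.le hL hy.1))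
  have hBc : IsCompact B := (hfs.cthickening).inter_right isClosed_Wcl
  have hBmeas : MeasurableSet B := hBc.measurableSet
  have hμB : μ B < ⊤ := hμ.2.2.2 B hBsub hBc
  have hmL : m L < ⊤ := hm.2.2.2 L hsupp hfs
  have hμL : μ L < ⊤ := hμ.2.2.2 L hsupp hfs
  have hπLuniv : π (L ×ˢ (univ : Set P2)) < ⊤ := by
    rw [coupling_prod_univ hπ0, hπ.2.1 L hsupp hLmeas]; exact hmL
  have hπunivL : π ((univ : Set P2) ×ˢ L) < ⊤ := by
    rw [coupling_univ_prod hπ0, hπ.2.2 L hsupp hLmeas]; exact hμL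
  have hπunivB : π ((univ : Set P2) ×ˢ B) = μ B := by
    rw [coupling_univ_prod hπ0, hπ.2.2 B hBsub hBmeas]
  obtain ⟨Cf, hCf⟩ := hfs.exists_bound_of_continuous hfc
  have int1 : Integrable (fun p : P2 × P2 => f p.1) π := by
    apply integrable_of_bound (hfc.comp continuous_fst).aestronglyMeasurable
      (hLmeas.prod MeasurableSet.univ) hπLuniv (C := Cf)
    intro p
    by_cases hp : p.1 ∈ L
    · rw [Set.indicator_of_mem (Set.mem_prod.2 ⟨hp, Set.mem_univ _⟩)]; exact hCf p.1
    · rw [Set.indicator_of_notMem (fun hc => hp hc.1)]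
      simp [Function.comp, image_eq_zero_of_notMem_tsupport hp]
  have int2 : Integrable (fun p : P2 × P2 => f p.2) π := by
    apply integrable_of_bound (hfc.comp continuous_snd).aestronglyMeasurable
      (MeasurableSet.univ.prod hLmeas) hπunivL (C := Cf)
    intro p
    by_cases hp : p.2 ∈ L
    · rw [Set.indicator_of_mem (Set.mem_prod.2 ⟨Set.mem_univ _, hp⟩)]; exact hCf p.2
    · rw [Set.indicator_of_notMem (fun hc => hp hc.2)]
      simp [Function.comp, image_eq_zero_of_notMem_tsupport hp]
  have heq1 : ∫ p : P2 × P2, f p.1 ∂π = ∫ x, f x ∂m := integral_fst_eq hπ0 hπ.2.1 hfc hsupp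
  have heq2 : ∫ p : P2 × P2, f p.2 ∂π = ∫ x, f x ∂μ := integral_snd_eq hπ0 hπ.2.2 hfc hsupp
  have hae : ∀ᵐ p ∂π, p ∈ msupport π ∧ p ∈ Wcl ×ˢ Wcl := by
    rw [ae_iff]
    apply measure_mono_null (fun p hp => ?_)
      (measure_union_null (radon_msupport hπ.1) hπ0)
    simp only [mem_setOf_eq, not_and_or] at hp
    rcases hp with h | h
    · exact Or.inl h
    · exact Or.inr h
  have hptw : ∀ᵐ p ∂π, ‖f p.1 - f p.2‖ ≤ ((univ : Set P2) ×ˢ B).indicator (fun _ => ε') p := by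
    filter_upwards [hae] with p hp
    have hdW : dW p.1 p.2 < δ := by
      have h1 : ENNReal.ofReal (dW p.1 p.2) ≤ costInf π := by
        apply le_iSup₂ (f := fun (q : P2 × P2) (_ : q ∈ msupport π) =>
          ENNReal.ofReal (dW q.1 q.2)) p hp.1
      exact (ENNReal.ofReal_lt_ofReal_iff hδpos).1 (lt_of_le_of_lt h1 hcost)
    by_cases hnz : p.1 ∈ L ∨ p.2 ∈ L
    · have hdist : dist p.1 p.2 < δ := by
        rcases min_lt_iff.1 hdW with h | h
        · exact h
        · exfalso
          have hd1 : 0 ≤ distDiag p.1 := Metric.infDist_nonneg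
          have hd2 : 0 ≤ distDiag p.2 := Metric.infDist_nonneg
          rcases hnz with hmem | hmem
          · have := hL p.1 hmem; linarith
          · have := hL p.2 hmem; linarith
      have hp2B : p.2 ∈ B := by
        rcases hnz with h | h
        · exact ⟨mem_cthickening_of_dist_le p.2 p.1 δ₂ L h
            (by rw [dist_comm]; linarith), hp.2.2⟩
        · exact ⟨self_subset_cthickening L h, hp.2.2⟩
      rw [Set.indicator_of_mem (Set.mem_prod.2 ⟨Set.mem_univ _, hp2B⟩), Real.norm_eq_abs]
      exact hmod _ _ hdist
    · push_neg at hnz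
      rw [image_eq_zero_of_notMem_tsupport hnz.1, image_eq_zero_of_notMem_tsupport hnz.2]
      simp only [sub_zero, norm_zero]
      exact Set.indicator_nonneg (fun _ _ => hε') p
  have intInd : Integrable (((univ : Set P2) ×ˢ B).indicator (fun _ => ε')) π :=
    (integrable_indicator_iff (MeasurableSet.univ.prod hBmeas)).2
      (integrableOn_const (by rw [hπunivB]; exact hμB.ne))
  calc |∫ x, f x ∂m - ∫ x, f x ∂μ|
      = ‖∫ p : P2 × P2, (f p.1 - f p.2) ∂π‖ := by
        rw [integral_sub int1 int2, heq1, heq2, Real.norm_eq_abs]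
  _ ≤ ∫ p : P2 × P2, ‖f p.1 - f p.2‖ ∂π := norm_integral_le_integral_norm _
  _ ≤ ∫ p : P2 × P2, ((univ : Set P2) ×ˢ B).indicator (fun _ => ε') p ∂π :=
        integral_mono_ae (int1.sub int2).norm intInd hptw
  _ = ε' * (μ B).toReal := by
        rw [integral_indicator_const _ (MeasurableSet.univ.prod hBmeas), measureReal_def, hπunivB,
          smul_eq_mul, mul_comm]

lemma integral_tendsto_of_OT {f : P2 → ℝ} (hf : IsCcW f) {μ : Measure P2}
    (hμ : RadonOn Wbd μ) {u : ℕ → Measure P2} (hu : ∀ n, RadonOn Wbd (u n))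
    (hOT : Tendsto (fun n => OT (u n) μ) atTop (𝓝 0)) :
    Tendsto (fun n => ∫ x, f x ∂(u n)) atTop (𝓝 (∫ x, f x ∂μ)) := by
  obtain ⟨hfc, hfs, hsupp⟩ := hf
  by_cases hLne : (tsupport f).Nonempty
  swap
  · have hf0 : f = fun _ => 0 := funext fun x => image_eq_zero_of_notMem_tsupport (by
      rw [not_nonempty_iff_eq_empty.1 hLne]; exact notMem_empty x)
    rw [hf0]
    simp only [integral_zero]
    exact tendsto_const_nhds
  obtain ⟨x₀, hx₀L, hx₀min⟩ := hfs.exists_isMinOn hLne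
    ((continuous_infDist_pt Diag).continuousOn)
  set δ₂ := distDiag x₀ / 2 with hδ₂
  have hδ₂pos : 0 < δ₂ := half_pos (distDiag_pos_of_Wbd (hsupp hx₀L))
  have hLlow : ∀ x ∈ tsupport f, 2*δ₂ ≤ distDiag x := by
    intro x hx
    have h : infDist x₀ Diag ≤ infDist x Diag := hx₀min hx
    rw [hδ₂]
    simp only [distDiag]
    linarith
  set B := cthickening δ₂ (tsupport f) ∩ Wcl with hBdef
  have hBsub : B ⊆ Wbd := fun y hy =>
    mem_Wbd_of_Wcl hy.2 (lt_of_lt_of_le hδ₂pos (cthick_distDiag hLne hδ₂pos.le hLlow hy.1))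
  have hBc : IsCompact B := (hfs.cthickening).inter_right isClosed_Wcl
  have hμB : μ B < ⊤ := hμ.2.2.2 B hBsub hBc
  set C := (μ B).toReal with hCdef
  have hC0 : 0 ≤ C := ENNReal.toReal_nonneg
  have key : ∀ ε' : ℝ, 0 < ε' → ∀ᶠ n in atTop, |∫ x, f x ∂(u n) - ∫ x, f x ∂μ| ≤ ε' * C := by
    intro ε' hε'
    obtain ⟨δ₁, hδ₁pos, hδ₁⟩ := Metric.uniformContinuous_iff.1
      (hfc.uniformContinuous_of_tendsto_cocompact hfs.is_zero_at_infty) ε' hε'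
    set δ := min δ₁ δ₂ with hδdef
    have hδpos : 0 < δ := lt_min hδ₁pos hδ₂pos
    have hev : ∀ᶠ n in atTop, OT (u n) μ < ENNReal.ofReal δ :=
      hOT.eventually_lt_const (ENNReal.ofReal_pos.2 hδpos)
    filter_upwards [hev] with n hn
    obtain ⟨π, hπc, hπcost⟩ : ∃ π, IsCoupling π (u n) μ ∧ costInf π < ENNReal.ofReal δ := by
      rw [OT] at hn
      obtain ⟨π, hπ⟩ := iInf_lt_iff.1 hn
      obtain ⟨hc, hcost⟩ := iInf_lt_iff.1 hπ
      exact ⟨π, hc, hcost⟩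
    exact key_est hfc hfs hsupp hLne (hu n) hμ hπc hδpos (min_le_right _ _) hδ₂pos hLlow
      (fun a b hab => by
        have := hδ₁ (lt_of_lt_of_le hab (min_le_left _ _))
        rw [Real.dist_eq] at this
        exact this.le) hε'.le hπcost
  rw [Metric.tendsto_atTop]
  intro ε hε
  have hε' : 0 < ε / (C+1) := by positivity
  obtain ⟨N, hN⟩ := eventually_atTop.1 (key _ hε')
  refine ⟨N, fun n hn => ?_⟩
  rw [Real.dist_eq]
  calc |∫ x, f x ∂(u n) - ∫ x, f x ∂μ| ≤ ε / (C+1) * C := hN n hn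
  _ < ε / (C+1) * (C+1) := mul_lt_mul_of_pos_left (lt_add_one C) hε'
  _ = ε := div_mul_cancel₀ ε (by linarith)
/-- The subalgebra of `C(M,ℝ)` generated by the linear representations
`{f̂ : f ∈ C_c(W)}` is dense in the compact-open topology: for every continuous
`F : M → ℝ`, compact `K ⊆ M` and `ε > 0` there are `f_1, …, f_N ∈ C_c(W)` and a real
polynomial `p` in `N` variables with
`sup_{μ ∈ K} |p(∫ f_1 dμ, …, ∫ f_N dμ) - F(μ)| < ε`. -/
theorem polynomial_linear_representation_approximation
    (F : Measure P2 → ℝ) (hF : SeqContinuousOn F MRadon)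
    (K : Set (Measure P2)) (hKM : K ⊆ MRadon) (hK : SeqCompactOT K)
    (ε : ℝ) (hε : 0 < ε) :
    ∃ (N : ℕ) (f : Fin N → P2 → ℝ), (∀ i, IsCcW (f i)) ∧
      ∃ p : MvPolynomial (Fin N) ℝ,
        ∀ μ ∈ K, |MvPolynomial.eval (fun i => ∫ x, f i x ∂μ) p - F μ| < ε := by
  classical
  let e : ℕ ≃ List Q4 := (Denumerable.eqv (List Q4)).symm
  set Φ : Measure P2 → (ℕ → ℝ) := fun ν k => ∫ x, gfam (e k) x ∂ν with hΦdef
  have hsep : ∀ μ' ∈ MRadon, ∀ ν' ∈ MRadon, Φ μ' = Φ ν' → μ' = ν' := by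
    intro μ' hμ' ν' hν' h
    apply measure_eq_of_integrals hμ' hν'
    intro T
    have h2 := congrFun h (e.symm T)
    simpa [hΦdef, e.apply_symm_apply] using h2
  have hΦcont : ∀ (v : ℕ → Measure P2), (∀ n, v n ∈ MRadon) → ∀ ν ∈ MRadon,
      Tendsto (fun n => OT (v n) ν) atTop (𝓝 0) →
      Tendsto (fun n => Φ (v n)) atTop (𝓝 (Φ ν)) := by
    intro v hv ν hν hOT
    rw [tendsto_pi_nhds]
    intro k
    exact integral_tendsto_of_OT (gfam_IsCcW (e k)) hν hv hOT
  set X : Set (ℕ → ℝ) := Φ '' K with hX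
  have hXc : IsCompact X := by
    rw [isCompact_iff_isSeqCompact]
    intro xs hxs
    have hxs' : ∀ n, ∃ m, m ∈ K ∧ Φ m = xs n := fun n => hxs n
    choose μs hμs hΦμs using hxs'
    obtain ⟨ν, hνK, φ, hφ, hOTν⟩ := hK μs hμs
    refine ⟨Φ ν, ⟨ν, hνK, rfl⟩, φ, hφ, ?_⟩
    have hconv := hΦcont (fun n => μs (φ n)) (fun n => hKM (hμs (φ n))) ν (hKM hνK) hOTν
    have hxsφ : (xs ∘ φ) = fun n => Φ (μs (φ n)) := funext fun n => (hΦμs (φ n)).symm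
    rw [hxsφ]
    exact hconv
  haveI hXcs : CompactSpace X := isCompact_iff_compactSpace.1 hXc
  set G : (ℕ → ℝ) → ℝ := fun x => if h : ∃ ν ∈ K, Φ ν = x then F h.choose else 0 with hGdef
  have hGΦ : ∀ ν ∈ K, G (Φ ν) = F ν := by
    intro ν hν
    have hex : ∃ ν' ∈ K, Φ ν' = Φ ν := ⟨ν, hν, rfl⟩
    rw [hGdef]
    simp only [dif_pos hex]
    exact congrArg F (hsep _ (hKM hex.choose_spec.1) _ (hKM hν) hex.choose_spec.2)
  have hGseq : ∀ (xs : ℕ → X) (x : X), Tendsto xs atTop (𝓝 x) →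
      Tendsto (fun n => G (xs n : ℕ → ℝ)) atTop (𝓝 (G (x : ℕ → ℝ))) := by
    intro xs x hxs
    have hxs' : ∀ n, ∃ m, m ∈ K ∧ Φ m = (xs n : ℕ → ℝ) := fun n => (xs n).2
    choose μs hμs hΦμs using hxs'
    obtain ⟨μ', hμ'K, hΦμ'⟩ := x.2
    have hval : (fun n => G (xs n : ℕ → ℝ)) = fun n => F (μs n) :=
      funext fun n => by rw [← hΦμs n, hGΦ _ (hμs n)]
    have hval' : G (x : ℕ → ℝ) = F μ' := by rw [← hΦμ', hGΦ _ hμ'K]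
    rw [hval, hval']
    apply tendsto_of_subseq_tendsto
    intro ns hns
    obtain ⟨ν, hνK, φ, hφ, hOTν⟩ := hK (fun n => μs (ns n)) (fun n => hμs (ns n))
    refine ⟨φ, ?_⟩
    have hFconv : Tendsto (fun n => F (μs (ns (φ n)))) atTop (𝓝 (F ν)) :=
      hF ν (hKM hνK) _ (fun n => hKM (hμs (ns (φ n)))) hOTν
    have hΦconv : Tendsto (fun n => Φ (μs (ns (φ n)))) atTop (𝓝 (Φ ν)) :=
      hΦcont _ (fun n => hKM (hμs (ns (φ n)))) ν (hKM hνK) hOTν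
    have hxconv : Tendsto (fun n => (xs (ns (φ n)) : ℕ → ℝ)) atTop (𝓝 (x : ℕ → ℝ)) := by
      have hcoe : Tendsto (fun n => (xs n : ℕ → ℝ)) atTop (𝓝 (x : ℕ → ℝ)) :=
        (continuous_subtype_val.tendsto x).comp hxs
      exact hcoe.comp (hns.comp hφ.tendsto_atTop)
    have hΦeq : (fun n => (xs (ns (φ n)) : ℕ → ℝ)) = fun n => Φ (μs (ns (φ n))) :=
      funext fun n => (hΦμs (ns (φ n))).symm
    rw [hΦeq] at hxconv
    have hx' : Φ ν = Φ μ' := by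
      rw [tendsto_nhds_unique hΦconv hxconv, hΦμ']
    have hνμ : ν = μ' := hsep _ (hKM hνK) _ (hKM hμ'K) hx'
    rw [← hνμ]
    exact hFconv
  have hGc : Continuous (fun x : X => G (x : ℕ → ℝ)) := by
    apply SeqContinuous.continuous
    intro xs x hxs
    exact hGseq xs x hxs
  set Gc : C(X, ℝ) := ⟨fun x => G (x : ℕ → ℝ), hGc⟩ with hGcdef
  let coord : ℕ → C(X, ℝ) := fun k =>
    ⟨fun x => (x : ℕ → ℝ) k, (continuous_apply k).comp continuous_subtype_val⟩
  set A : Subalgebra ℝ C(X, ℝ) := Algebra.adjoin ℝ (Set.range coord) with hA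
  have hAsep : A.SeparatesPoints := by
    intro x y hxy
    have hne : (x : ℕ → ℝ) ≠ (y : ℕ → ℝ) := fun h => hxy (Subtype.ext h)
    obtain ⟨k, hk⟩ := Function.ne_iff.1 hne
    exact ⟨coord k, ⟨coord k, Algebra.subset_adjoin ⟨k, rfl⟩, rfl⟩, hk⟩
  have htop := ContinuousMap.subalgebra_topologicalClosure_eq_top_of_separatesPoints A hAsep
  have hGcl : Gc ∈ closure (A : Set C(X, ℝ)) := by
    have h1 : Gc ∈ A.topologicalClosure := by
      rw [htop]; exact Algebra.mem_top
    exact h1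
  obtain ⟨g, hgA, hgd⟩ := Metric.mem_closure_iff.1 hGcl ε hε
  have hrep : ∀ h (_ : h ∈ A), ∃ p : MvPolynomial ℕ ℝ,
      ∀ x : X, h x = MvPolynomial.eval (fun k => (x : ℕ → ℝ) k) p := by
    intro h hh
    refine Algebra.adjoin_induction (fun g' hg' => ?_) (fun r => ?_)
      (fun g₁ g₂ _ _ h₁ h₂ => ?_) (fun g₁ g₂ _ _ h₁ h₂ => ?_) hh
    · obtain ⟨k, rfl⟩ := hg'
      exact ⟨MvPolynomial.X k, fun x => by simp [coord]⟩
    · exact ⟨MvPolynomial.C r, fun x => by simp⟩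
    · obtain ⟨p₁, hp₁⟩ := h₁
      obtain ⟨p₂, hp₂⟩ := h₂
      exact ⟨p₁ + p₂, fun x => by simp [hp₁ x, hp₂ x]⟩
    · obtain ⟨p₁, hp₁⟩ := h₁
      obtain ⟨p₂, hp₂⟩ := h₂
      exact ⟨p₁ * p₂, fun x => by simp [hp₁ x, hp₂ x]⟩
  obtain ⟨p, hp⟩ := hrep g hgA
  obtain ⟨N, emb, hembinj, q, hq⟩ := MvPolynomial.exists_fin_rename p
  refine ⟨N, fun i => gfam (e (emb i)), fun i => gfam_IsCcW _, q, ?_⟩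
  intro μ hμK
  have hxμ : Φ μ ∈ X := ⟨μ, hμK, rfl⟩
  set xμ : X := ⟨Φ μ, hxμ⟩ with hxμdef
  have heval : MvPolynomial.eval (fun i => ∫ x, gfam (e (emb i)) x ∂μ) q = g xμ := by
    have h1 : (fun i => ∫ x, gfam (e (emb i)) x ∂μ) = (fun k => Φ μ k) ∘ emb := rfl
    rw [h1, ← MvPolynomial.eval_rename, ← hq, hp xμ]
  have hGx : F μ = Gc xμ := by
    have : Gc xμ = G (Φ μ) := rfl
    rw [this, hGΦ _ hμK]
  rw [heval, hGx]
  calc |g xμ - Gc xμ| = dist (g xμ) (Gc xμ) := (Real.dist_eq _ _).symm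
  _ ≤ dist g Gc := ContinuousMap.dist_apply_le_dist xμ
  _ = dist Gc g := dist_comm _ _
  _ < ε := hgd
end
end

section
/- Fix x ∈ W and let S = { (1/n)·δ_x : n ∈ ℕ, n ≥ 1 } ⊆ M_f^∞, where δ_x is the Dirac measure at x. Then S is bounded in (M_f^∞, OT_∞), uniformly off-diagonally finite, and off-diagonally uniformly tight, but S is not relatively compact in (M_f^∞, OT_∞). In particular, boundedness, uniform off-diagonal finiteness, and off-diagonal uniform tightness together are not sufficient for relative compactness in (M_f^∞, OT_∞). -/
/-! Common setup: the birth-death plane, Radon measures, partial optimal transport. -/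

noncomputable section

open MeasureTheory Topology Filter Set
open scoped ENNReal

/-- `S` is relatively compact in `(M_f^∞, OT_∞)` (sequential formulation, equivalent to
compactness of the closure in a metric space): every sequence in `S` has a subsequence
converging in `OT_∞` to some element of `M_f^∞`. -/
def RelCompactInMf (S : Set (Measure P2)) : Prop :=
  ∀ u : ℕ → Measure P2, (∀ n, u n ∈ S) →
    ∃ μ ∈ Mf, ∃ φ : ℕ → ℕ, StrictMono φ ∧ Tendsto (fun n => OT (u (φ n)) μ) atTop (𝓝 0)


/-! ### Auxiliary lemmas -/

lemma radonOn_finite_carrier {α : Type*} [TopologicalSpace α] [T1Space α]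
    [MeasurableSpace α] [OpensMeasurableSpace α]
    (S : Set α) (μ : Measure α) (F : Set α) (hF : F.Finite) (hFS : F ⊆ S)
    (h0 : μ Fᶜ = 0) (hfin : μ F < ⊤) : RadonOn S μ := by
  refine ⟨measure_mono_null (compl_subset_compl.mpr hFS) h0, ?_, ?_, ?_⟩
  · intro U hU
    refine le_antisymm ?_ ?_
    · have hK1 : F ∩ (U ∩ S) ⊆ U ∩ S := inter_subset_right
      have hK2 : IsCompact (F ∩ (U ∩ S)) := (hF.subset inter_subset_left).isCompact
      have hle : μ (U ∩ S) ≤ μ (F ∩ (U ∩ S)) := by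
        calc μ (U ∩ S) ≤ μ ((F ∩ (U ∩ S)) ∪ Fᶜ) := by
              apply measure_mono; intro p hp
              by_cases hpF : p ∈ F
              · exact Or.inl ⟨hpF, hp⟩
              · exact Or.inr hpF
          _ ≤ μ (F ∩ (U ∩ S)) + μ Fᶜ := measure_union_le _ _
          _ = μ (F ∩ (U ∩ S)) := by rw [h0, add_zero]
      exact hle.trans (le_iSup_of_le (F ∩ (U ∩ S)) (le_iSup_of_le hK1 (le_iSup_of_le hK2 le_rfl)))
    · exact iSup_le fun K => iSup_le fun h1 => iSup_le fun _ => measure_mono h1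
  · intro E hES hE
    refine le_antisymm ?_ ?_
    · exact le_iInf fun U => le_iInf fun hU => le_iInf fun hEU =>
        measure_mono (subset_inter hEU hES)
    · have hopen : IsOpen (F \ E)ᶜ := ((hF.subset diff_subset).isClosed).isOpen_compl
      have hEsub : E ⊆ (F \ E)ᶜ := fun p hp hpd => hpd.2 hp
      have hle : μ ((F \ E)ᶜ ∩ S) ≤ μ E := by
        calc μ ((F \ E)ᶜ ∩ S) ≤ μ (E ∪ Fᶜ) := by
              apply measure_mono; intro p hp
              by_cases hpF : p ∈ F
              · by_cases hpE : p ∈ E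
                · exact Or.inl hpE
                · exact absurd ⟨hpF, hpE⟩ hp.1
              · exact Or.inr hpF
          _ ≤ μ E + μ Fᶜ := measure_union_le _ _
          _ = μ E := by rw [h0, add_zero]
      exact iInf_le_of_le (F \ E)ᶜ (iInf_le_of_le hopen (iInf_le_of_le hEsub hle))
  · intro K _ _
    calc μ K ≤ μ (F ∪ Fᶜ) := measure_mono (by simp)
      _ ≤ μ F + μ Fᶜ := measure_union_le _ _
      _ < ⊤ := by rw [h0, add_zero]; exact hfin

lemma msupport_subset_closed {α : Type*} [TopologicalSpace α] [MeasurableSpace α]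
    {μ : Measure α} {F : Set α} (hF : IsClosed F) (h0 : μ Fᶜ = 0) :
    msupport μ ⊆ F := by
  intro y hy
  by_contra hyF
  have := hy Fᶜ (hF.isOpen_compl.mem_nhds hyF)
  simp [h0] at this

lemma measure_compact_null_of_disjoint_msupport {α : Type*} [TopologicalSpace α]
    [MeasurableSpace α] {μ : Measure α} {K : Set α} (hK : IsCompact K)
    (h : ∀ k ∈ K, k ∉ msupport μ) : μ K = 0 := by
  have hU : ∀ k ∈ K, ∃ U, U ∈ 𝓝 k ∧ μ U = 0 := by
    intro k hk
    have := h k hk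
    simp only [msupport, mem_setOf_eq, not_forall] at this
    obtain ⟨U, hU, hpos⟩ := this
    exact ⟨U, hU, by simpa [pos_iff_ne_zero] using hpos⟩
  choose! U hU1 hU2 using hU
  obtain ⟨t, htK, hcov⟩ := hK.elim_nhds_subcover U hU1
  have : μ (⋃ k ∈ t, U k) = 0 :=
    (measure_biUnion_null_iff t.countable_toSet).mpr fun k hk => hU2 k (htK k hk)
  exact measure_mono_null hcov this

lemma measure_open_null_of_radon {α : Type*} [TopologicalSpace α] [MeasurableSpace α]
    {S V : Set α} {μ : Measure α} (hrad : RadonOn S μ) (hV : IsOpen V)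
    (h : ∀ p ∈ V, p ∉ msupport μ) : μ V = 0 := by
  have h1 : μ (V ∩ S) = 0 := by
    rw [hrad.2.1 V hV]
    refine le_antisymm (iSup_le fun K => iSup_le fun hK1 => iSup_le fun hK2 => ?_) zero_le
    rw [measure_compact_null_of_disjoint_msupport hK2 fun k hk => h k (hK1 hk).1]
  have hsub : V ⊆ (V ∩ S) ∪ Sᶜ := by
    intro p hp
    by_cases hpS : p ∈ S
    · exact Or.inl ⟨hp, hpS⟩
    · exact Or.inr hpS
  refine le_antisymm ?_ zero_le
  calc μ V ≤ μ ((V ∩ S) ∪ Sᶜ) := measure_mono hsub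
    _ ≤ μ (V ∩ S) + μ Sᶜ := measure_union_le _ _
    _ ≤ 0 := by rw [h1, hrad.1, add_zero]

lemma ball_subset_Wbd {x : P2} (hx : x ∈ Wbd) {s : ℝ} (hs : s ≤ (x.2 - x.1)/2) :
    Metric.ball x s ⊆ Wbd := by
  intro y hy
  by_contra hyW
  simp only [Wbd, mem_setOf_eq, not_lt] at hyW
  have hd : dist y x < s := Metric.mem_ball.mp hy
  have h1 : dist y.1 x.1 ≤ dist y x := by rw [Prod.dist_eq]; exact le_max_left _ _
  have h2 : dist y.2 x.2 ≤ dist y x := by rw [Prod.dist_eq]; exact le_max_right _ _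
  rw [Real.dist_eq] at h1 h2
  have ha : y.1 - x.1 ≤ |y.1 - x.1| := le_abs_self _
  have hb : x.2 - y.2 ≤ |y.2 - x.2| := by rw [abs_sub_comm]; exact le_abs_self _
  have hxlt : x.1 < x.2 := hx
  linarith

lemma r_le_distDiag {x : P2} : (x.2 - x.1)/2 ≤ distDiag x := by
  by_contra hlt
  push_neg at hlt
  have hne : Diag.Nonempty := ⟨(0,0), rfl⟩
  rw [distDiag, Metric.infDist_lt_iff hne] at hlt
  obtain ⟨y, hy, hdy⟩ := hlt
  have hyd : y.1 = y.2 := hy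
  have h1 : dist x.1 y.1 ≤ dist x y := by rw [Prod.dist_eq]; exact le_max_left _ _
  have h2 : dist x.2 y.2 ≤ dist x y := by rw [Prod.dist_eq]; exact le_max_right _ _
  rw [Real.dist_eq] at h1 h2
  have ha : y.1 - x.1 ≤ |x.1 - y.1| := by rw [abs_sub_comm]; exact le_abs_self _
  have hb : x.2 - y.2 ≤ |x.2 - y.2| := le_abs_self _
  linarith

lemma diag_mem_Wcl (m : ℝ) : ((m, m) : P2) ∈ Wcl := by
  rw [Wcl, Metric.mem_closure_iff]
  intro ε hε
  refine ⟨(m - ε/2, m), by simp only [Wbd, mem_setOf_eq]; linarith, ?_⟩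
  rw [Prod.dist_eq, Real.dist_eq, Real.dist_eq]
  have h1 : |m - (m - ε/2)| = ε/2 := by
    rw [show m - (m - ε/2) = ε/2 by ring]; exact abs_of_pos (by linarith)
  have h2 : |m - m| = 0 := by simp
  rw [h1, h2]
  exact max_lt (by linarith) hε

/-- The counterexample: for fixed `x ∈ W`, the family
`S = { (1/n)·δ_x : n ≥ 1 }` is bounded, uniformly off-diagonally finite, and
off-diagonally uniformly tight, yet not relatively compact in `(M_f^∞, OT_∞)`. Hence
these three conditions are not sufficient for relative compactness. -/
theorem dirac_family_not_relatively_compact (x : P2) (hx : x ∈ Wbd) :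
    let S : Set (Measure P2) :=
      {μ | ∃ n : ℕ, 0 < n ∧ μ = ((n : ℝ≥0∞))⁻¹ • Measure.dirac x}
    S ⊆ Mf ∧
    (∃ μ ∈ S, ∃ M : ℝ, 0 < M ∧ ∀ ν ∈ S, OT μ ν < ENNReal.ofReal M) ∧
    (∀ ε : ℝ, 0 < ε → (⨆ μ ∈ S, μ (closure (Weps ε) ∩ Wbd)) < ⊤) ∧
    (∀ ε : ℝ, 0 < ε → ∀ δ : ℝ, 0 < δ → ∃ N : ℕ,
      (⨆ μ ∈ S, μ (Weps ε ∩ ((Set.Icc (-(N : ℝ)) (N : ℝ))ᶜ ×ˢ Set.univ)))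
        < ENNReal.ofReal δ) ∧
    ¬ RelCompactInMf S := by
  classical
  intro S
  have hxlt : x.1 < x.2 := hx
  set r : ℝ := (x.2 - x.1)/2 with hrdef
  have hr : 0 < r := by rw [hrdef]; linarith
  have hrd : r ≤ distDiag x := r_le_distDiag
  have hddnn : ∀ p : P2, 0 ≤ distDiag p := fun p => Metric.infDist_nonneg
  have hx_ball : ∀ s : ℝ, s ≤ r → Metric.ball x s ⊆ Wbd := fun s hs => ball_subset_Wbd hx hs
  have hWclmeas : MeasurableSet Wcl := isClosed_closure.measurableSet
  have hWbdWcl : Wbd ⊆ Wcl := subset_closure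
  have hxWcl : x ∈ Wcl := hWbdWcl hx
  have hS_eval : ∀ (n : ℕ) (A : Set P2), MeasurableSet A →
      ((n : ℝ≥0∞)⁻¹ • Measure.dirac x) A = if x ∈ A then (n : ℝ≥0∞)⁻¹ else 0 := by
    intro n A hA
    rw [Measure.smul_apply, smul_eq_mul, Measure.dirac_apply' _ hA, Set.indicator_apply]
    split <;> simp
  have hS_bound : ∀ (n : ℕ) (A : Set P2), ((n : ℝ≥0∞)⁻¹ • Measure.dirac x) A ≤ (n : ℝ≥0∞)⁻¹ := by
    intro n A
    calc ((n : ℝ≥0∞)⁻¹ • Measure.dirac x) A ≤ ((n : ℝ≥0∞)⁻¹ • Measure.dirac x) univ :=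
          measure_mono (subset_univ A)
      _ = (n : ℝ≥0∞)⁻¹ := by rw [hS_eval n univ MeasurableSet.univ, if_pos (mem_univ x)]
  have hS_null : ∀ n : ℕ, ((n : ℝ≥0∞)⁻¹ • Measure.dirac x) {x}ᶜ = 0 := by
    intro n
    rw [hS_eval n _ (measurableSet_singleton x).compl, if_neg (by simp)]
  -- Part 1 : S ⊆ Mf
  have part1 : S ⊆ Mf := by
    rintro μ ⟨n, hn, rfl⟩
    have hninv : ((n : ℝ≥0∞))⁻¹ < ⊤ := ENNReal.inv_lt_top.mpr (by exact_mod_cast hn)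
    refine ⟨⟨radonOn_finite_carrier Wbd _ {x} (finite_singleton x)
      (singleton_subset_iff.mpr hx) (hS_null n) (lt_of_le_of_lt (hS_bound n _) hninv), ?_⟩,
      fun ε hε => lt_of_le_of_lt (hS_bound n _) hninv⟩
    have hsupp : msupport ((n : ℝ≥0∞)⁻¹ • Measure.dirac x) ⊆ {x} :=
      msupport_subset_closed isClosed_singleton (hS_null n)
    calc persInf ((n : ℝ≥0∞)⁻¹ • Measure.dirac x)
        ≤ ENNReal.ofReal (distDiag x) := by
          refine iSup_le fun y => iSup_le fun hy => ?_
          have : y = x := hsupp hy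
          rw [this]
      _ < ⊤ := ENNReal.ofReal_lt_top
  refine ⟨part1, ?_, ?_, ?_, ?_⟩
  · -- Part 2 : bounded
    have hdd1 : (0:ℝ) < distDiag x + 1 := by linarith [hddnn x]
    refine ⟨(((1:ℕ) : ℝ≥0∞))⁻¹ • Measure.dirac x, ⟨1, one_pos, rfl⟩, distDiag x + 1, hdd1, ?_⟩
    rintro ν ⟨m, hm, rfl⟩
    set a : ℝ≥0∞ := ((m : ℝ≥0∞))⁻¹ with ha
    have ha1 : a ≤ 1 := ENNReal.inv_le_one.mpr (by exact_mod_cast hm)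
    set xbar : P2 := ((x.1 + x.2)/2, (x.1 + x.2)/2) with hxbar
    have hxbarWcl : xbar ∈ Wcl := diag_mem_Wcl _
    have hxbarDiag : xbar ∈ Diag := rfl
    have hxbarnW : xbar ∉ Wbd := by simp [Wbd, hxbar]
    set π : Measure (P2 × P2) :=
      a • Measure.dirac (x, x) + (1 - a) • Measure.dirac (x, xbar) with hπ
    have hπeval : ∀ E : Set (P2 × P2), MeasurableSet E →
        π E = (if (x, x) ∈ E then a else 0) + (if (x, xbar) ∈ E then 1 - a else 0) := by
      intro E hE
      rw [hπ, Measure.add_apply, Measure.smul_apply, Measure.smul_apply, smul_eq_mul,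
        smul_eq_mul, Measure.dirac_apply' _ hE, Measure.dirac_apply' _ hE,
        Set.indicator_apply, Set.indicator_apply]
      split <;> split <;> simp
    have hF : ({((x, x) : P2 × P2), (x, xbar)} : Set (P2 × P2)).Finite :=
      (finite_singleton _).insert _
    have hFsub : ({((x, x) : P2 × P2), (x, xbar)} : Set (P2 × P2)) ⊆ Wcl ×ˢ Wcl := by
      rintro p (rfl | rfl)
      · exact ⟨hxWcl, hxWcl⟩
      · exact ⟨hxWcl, hxbarWcl⟩
    have hπF0 : π ({((x, x) : P2 × P2), (x, xbar)} : Set (P2 × P2))ᶜ = 0 := by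
      rw [hπeval _ hF.measurableSet.compl, if_neg (by simp), if_neg (by simp), add_zero]
    have hcpl : IsCoupling π ((((1:ℕ) : ℝ≥0∞))⁻¹ • Measure.dirac x)
        (((m : ℝ≥0∞))⁻¹ • Measure.dirac x) := by
      refine ⟨radonOn_finite_carrier _ _ _ hF hFsub hπF0 ?_, ?_, ?_⟩
      · have huniv : π univ = 1 := by
          rw [hπeval _ MeasurableSet.univ, if_pos (mem_univ _), if_pos (mem_univ _),
            add_tsub_cancel_of_le ha1]
        exact lt_of_le_of_lt (measure_mono (subset_univ _)) (huniv ▸ ENNReal.one_lt_top)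
      · intro A hA hAm
        rw [hπeval _ (hAm.prod hWclmeas), hS_eval 1 A hAm]
        by_cases hxA : x ∈ A
        · rw [if_pos (Set.mem_prod.mpr ⟨hxA, hxWcl⟩), if_pos (Set.mem_prod.mpr ⟨hxA, hxbarWcl⟩),
            if_pos hxA, add_tsub_cancel_of_le ha1]
          simp
        · rw [if_neg (fun h => hxA (Set.mem_prod.mp h).1),
            if_neg (fun h => hxA (Set.mem_prod.mp h).1), if_neg hxA, add_zero]
      · intro B hB hBm
        rw [hπeval _ (hWclmeas.prod hBm), hS_eval m B hBm]
        have hxbarB : ((x, xbar) : P2 × P2) ∉ Wcl ×ˢ B := fun h =>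
          hxbarnW (hB (Set.mem_prod.mp h).2)
        by_cases hxB : x ∈ B
        · rw [if_pos (Set.mem_prod.mpr ⟨hxWcl, hxB⟩), if_neg hxbarB, add_zero, if_pos hxB]
        · rw [if_neg (fun h => hxB (Set.mem_prod.mp h).2), if_neg hxbarB, add_zero, if_neg hxB]
    have hsuppπ : msupport π ⊆ {((x, x) : P2 × P2), (x, xbar)} :=
      msupport_subset_closed hF.isClosed hπF0
    have hcost : costInf π ≤ ENNReal.ofReal (distDiag x) := by
      refine iSup_le fun p => iSup_le fun hp => ?_
      rcases hsuppπ hp with h | h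
      · rw [h]
        refine ENNReal.ofReal_le_ofReal ?_
        calc dW x x ≤ dist x x := min_le_left _ _
          _ = 0 := dist_self x
          _ ≤ distDiag x := hddnn x
      · rw [mem_singleton_iff] at h
        rw [h]
        refine ENNReal.ofReal_le_ofReal ?_
        calc dW x xbar ≤ distDiag x + distDiag xbar := min_le_right _ _
          _ = distDiag x := by
              rw [show distDiag xbar = 0 from Metric.infDist_zero_of_mem hxbarDiag, add_zero]
    calc OT ((((1:ℕ) : ℝ≥0∞))⁻¹ • Measure.dirac x) (((m : ℝ≥0∞))⁻¹ • Measure.dirac x)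
        ≤ costInf π := iInf_le_of_le π (iInf_le_of_le hcpl le_rfl)
      _ ≤ ENNReal.ofReal (distDiag x) := hcost
      _ < ENNReal.ofReal (distDiag x + 1) :=
          (ENNReal.ofReal_lt_ofReal_iff hdd1).mpr (lt_add_one _)
  · -- Part 3 : uniformly off-diagonally finite
    intro ε hε
    refine lt_of_le_of_lt (iSup_le fun μ => iSup_le fun hμ => ?_) (by exact ENNReal.one_lt_top)
    obtain ⟨n, hn, rfl⟩ := hμ
    exact (hS_bound n _).trans (ENNReal.inv_le_one.mpr (by exact_mod_cast hn))
  · -- Part 4 : off-diagonally uniformly tight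
    intro ε hε δ hδ
    refine ⟨⌈|x.1|⌉₊ + 1, lt_of_le_of_lt (iSup_le fun μ => iSup_le fun hμ => ?_)
      (ENNReal.ofReal_pos.mpr hδ)⟩
    obtain ⟨n, hn, rfl⟩ := hμ
    have hxN : |x.1| ≤ ((⌈|x.1|⌉₊ + 1 : ℕ) : ℝ) := by
      push_cast
      have := Nat.le_ceil |x.1|
      linarith
    rw [abs_le] at hxN
    have hsub : Weps ε ∩ ((Set.Icc (-((⌈|x.1|⌉₊ + 1 : ℕ) : ℝ)) ((⌈|x.1|⌉₊ + 1 : ℕ) : ℝ))ᶜ ×ˢ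
        Set.univ) ⊆ {x}ᶜ := by
      rintro p ⟨_, hp2, _⟩ hpx
      rw [mem_singleton_iff] at hpx
      subst hpx
      exact hp2 ⟨hxN.1, hxN.2⟩
    rw [measure_mono_null hsub (hS_null n)]
  · -- Part 5 : not relatively compact
    intro hrc
    set u : ℕ → Measure P2 := fun n => (((n + 1 : ℕ) : ℝ≥0∞))⁻¹ • Measure.dirac x with hu
    obtain ⟨μ, hμMf, φ, hφ, hconv⟩ := hrc u (fun n => ⟨n + 1, n.succ_pos, rfl⟩)
    have h8 : (0 : ℝ≥0∞) < ENNReal.ofReal (r/8) := ENNReal.ofReal_pos.mpr (by linarith)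
    obtain ⟨n0, hn0⟩ := eventually_atTop.mp (hconv.eventually_lt_const h8)
    -- the key two-sided estimate
    have key : ∀ N : ℕ, OT (u N) μ < ENNReal.ofReal (r/8) →
        (((N + 1 : ℕ) : ℝ≥0∞))⁻¹ ≤ μ (Metric.closedBall x (r/5)) ∧
        μ (Metric.closedBall x (r/5)) ≤ (((N + 1 : ℕ) : ℝ≥0∞))⁻¹ := by
      intro N hN
      rw [OT, iInf_lt_iff] at hN
      obtain ⟨π, hN⟩ := hN
      rw [iInf_lt_iff] at hN
      obtain ⟨hcpl, hcost⟩ := hN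
      have hsupp : ∀ p ∈ msupport π, dW p.1 p.2 < r/8 := by
        intro p hp
        have h1 : ENNReal.ofReal (dW p.1 p.2) ≤ costInf π :=
          le_iSup_of_le p (le_iSup_of_le hp le_rfl)
        exact (ENNReal.ofReal_lt_ofReal_iff (by linarith)).mp (h1.trans_lt hcost)
      have hV0 : ∀ V : Set (P2 × P2), IsOpen V → (∀ p ∈ V, r/8 ≤ dW p.1 p.2) → π V = 0 := by
        intro V hVo hVd
        exact measure_open_null_of_radon hcpl.1 hVo fun p hp hps =>
          absurd (hsupp p hps) (not_lt.mpr (hVd p hp))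
      have hdd : ∀ p : P2, distDiag x - dist p x ≤ distDiag p := by
        intro p
        have h := Metric.infDist_le_infDist_add_dist (x := x) (y := p) (s := Diag)
        rw [dist_comm] at h
        rw [distDiag, distDiag]
        linarith
      -- subsets of W
      have hA : Metric.ball x (r/16) ⊆ Wbd := hx_ball _ (by linarith)
      have hcb5 : Metric.closedBall x (r/5) ⊆ Wbd := fun y hy =>
        hx_ball r le_rfl (Metric.mem_ball.mpr (lt_of_le_of_lt (Metric.mem_closedBall.mp hy)
          (by linarith)))
      have hcb2 : Metric.closedBall x (r/2) ⊆ Wbd := fun y hy =>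
        hx_ball r le_rfl (Metric.mem_ball.mpr (lt_of_le_of_lt (Metric.mem_closedBall.mp hy)
          (by linarith)))
      -- the two null open sets
      set V1 : Set (P2 × P2) := Metric.ball x (r/16) ×ˢ (Metric.closedBall x (r/5))ᶜ with hV1def
      set V2 : Set (P2 × P2) := (Metric.closedBall x (r/2))ᶜ ×ˢ Metric.ball x (r/4) with hV2def
      have hπV1 : π V1 = 0 := by
        refine hV0 V1 (Metric.isOpen_ball.prod Metric.isClosed_closedBall.isOpen_compl) ?_
        rintro p ⟨hp1, hp2⟩
        have h1 : dist p.1 x < r/16 := Metric.mem_ball.mp hp1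
        have h2 : r/5 < dist p.2 x := lt_of_not_ge fun h => hp2 (Metric.mem_closedBall.mpr h)
        refine le_min ?_ ?_
        · have ht : dist p.2 x ≤ dist p.2 p.1 + dist p.1 x := dist_triangle _ _ _
          have hc : dist p.1 p.2 = dist p.2 p.1 := dist_comm _ _
          linarith
        · have := hdd p.1
          have h0 : 0 ≤ distDiag p.2 := hddnn p.2
          linarith
      have hπV2 : π V2 = 0 := by
        refine hV0 V2 (Metric.isClosed_closedBall.isOpen_compl.prod Metric.isOpen_ball) ?_
        rintro p ⟨hp1, hp2⟩
        have h1 : r/2 < dist p.1 x := lt_of_not_ge fun h => hp1 (Metric.mem_closedBall.mpr h)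
        have h2 : dist p.2 x < r/4 := Metric.mem_ball.mp hp2
        refine le_min ?_ ?_
        · have ht : dist p.1 x ≤ dist p.1 p.2 + dist p.2 x := dist_triangle _ _ _
          linarith
        · have := hdd p.2
          have h0 : 0 ≤ distDiag p.1 := hddnn p.1
          linarith
      -- marginal identities
      have hm1 := hcpl.2.1 (Metric.ball x (r/16)) hA measurableSet_ball
      have hm1' := hcpl.2.1 (Metric.closedBall x (r/2)) hcb2 measurableSet_closedBall
      have hm2 := hcpl.2.2 (Metric.closedBall x (r/5)) hcb5 measurableSet_closedBall
      have huA : u N (Metric.ball x (r/16)) = (((N + 1 : ℕ) : ℝ≥0∞))⁻¹ := by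
        rw [hu]
        rw [hS_eval (N + 1) _ measurableSet_ball,
          if_pos (Metric.mem_ball_self (by linarith))]
      constructor
      · -- lower bound
        have hsub1 : Metric.ball x (r/16) ×ˢ Wcl ⊆ V1 ∪ (Wcl ×ˢ Metric.closedBall x (r/5)) := by
          rintro p ⟨hp1, hp2⟩
          by_cases h : p.2 ∈ Metric.closedBall x (r/5)
          · exact Or.inr ⟨hWbdWcl (hA hp1), h⟩
          · exact Or.inl ⟨hp1, h⟩
        calc (((N + 1 : ℕ) : ℝ≥0∞))⁻¹ = π (Metric.ball x (r/16) ×ˢ Wcl) := by rw [hm1, huA]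
          _ ≤ π (V1 ∪ (Wcl ×ˢ Metric.closedBall x (r/5))) := measure_mono hsub1
          _ ≤ π V1 + π (Wcl ×ˢ Metric.closedBall x (r/5)) := measure_union_le _ _
          _ = μ (Metric.closedBall x (r/5)) := by rw [hπV1, hm2, zero_add]
      · -- upper bound
        have hsub2 : Wcl ×ˢ Metric.closedBall x (r/5) ⊆
            V2 ∪ (Metric.closedBall x (r/2) ×ˢ Wcl) := by
          rintro p ⟨hp1, hp2⟩
          by_cases h : p.1 ∈ Metric.closedBall x (r/2)
          · exact Or.inr ⟨h, hWbdWcl (hcb5 hp2)⟩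
          · exact Or.inl ⟨h, Metric.mem_ball.mpr
              (lt_of_le_of_lt (Metric.mem_closedBall.mp hp2) (by linarith))⟩
        calc μ (Metric.closedBall x (r/5)) = π (Wcl ×ˢ Metric.closedBall x (r/5)) := hm2.symm
          _ ≤ π (V2 ∪ (Metric.closedBall x (r/2) ×ˢ Wcl)) := measure_mono hsub2
          _ ≤ π V2 + π (Metric.closedBall x (r/2) ×ˢ Wcl) := measure_union_le _ _
          _ = u N (Metric.closedBall x (r/2)) := by rw [hπV2, hm1', zero_add]
          _ ≤ (((N + 1 : ℕ) : ℝ≥0∞))⁻¹ := by rw [hu]; exact hS_bound (N + 1) _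
    have hk1 := key (φ n0) (hn0 n0 le_rfl)
    have hk2 := key (φ (n0 + 1)) (hn0 (n0 + 1) (Nat.le_succ n0))
    have hmono : φ n0 < φ (n0 + 1) := hφ (Nat.lt_succ_self n0)
    have hlt : (((φ (n0 + 1) + 1 : ℕ) : ℝ≥0∞))⁻¹ < (((φ n0 + 1 : ℕ) : ℝ≥0∞))⁻¹ := by
      rw [ENNReal.inv_lt_inv]
      exact_mod_cast Nat.succ_lt_succ hmono
    exact absurd (hk1.1.trans hk2.2) (not_le.mpr hlt)
end
end

section
/- Let x ∈ W and let 0 ≤ α < β. Then OT_∞(α·δ_x, β·δ_x) = d(x, Δ), where δ_x is the Dirac measure at x. -/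
/-! Common setup: the birth-death plane, Radon measures, partial optimal transport. -/

noncomputable section

open MeasureTheory Topology Filter Set
open scoped ENNReal

lemma Wcl_eq : Wcl = {p : P2 | p.1 ≤ p.2} := by
  apply Subset.antisymm
  · exact closure_minimal (fun p hp => le_of_lt (a := p.1) hp)
      (isClosed_le continuous_fst continuous_snd)
  · intro p hp
    rw [Wcl, mem_closure_iff_seq_limit]
    refine ⟨fun n => (p.1 - 1/(n+1), p.2), fun n => ?_, ?_⟩
    · have h : (0:ℝ) < 1/(n+1) := by positivity
      have := hp.out
      show p.1 - 1/(n+1) < p.2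
      linarith
    · have h1 : Tendsto (fun n : ℕ => p.1 - 1/(n+1)) atTop (𝓝 (p.1 - 0)) :=
        tendsto_const_nhds.sub tendsto_one_div_add_atTop_nhds_zero_nat
      rw [sub_zero] at h1
      exact (h1.prodMk_nhds tendsto_const_nhds)

lemma msupport_compl_null {α : Type*} [TopologicalSpace α] [SecondCountableTopology α]
    [MeasurableSpace α] (μ : Measure α) : μ (msupport μ)ᶜ = 0 := by
  set S : Set (Set α) := {U | IsOpen U ∧ μ U = 0} with hS
  obtain ⟨T, hTc, hTS, hTU⟩ := TopologicalSpace.isOpen_sUnion_countable S (fun U hU => hU.1)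
  have hsub : (msupport μ)ᶜ ⊆ ⋃₀ S := by
    intro p hp
    simp only [msupport, mem_compl_iff, mem_setOf_eq, not_forall] at hp
    obtain ⟨V, hV, hV0⟩ := hp
    obtain ⟨U, hUV, hUo, hpU⟩ := mem_nhds_iff.1 hV
    have : μ U = 0 := measure_mono_null hUV (by simpa using hV0)
    exact ⟨U, ⟨hUo, this⟩, hpU⟩
  refine measure_mono_null (hsub.trans hTU.symm.subset) ?_
  rw [sUnion_eq_biUnion]
  exact (measure_biUnion_null_iff hTc).2 fun U hU => (hTS hU).2

/-- For `x ∈ W` and `0 ≤ α < β`,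
`OT_∞(α·δ_x, β·δ_x) = d(x, Δ)`. -/
theorem OT_dirac_scalings (x : P2) (hx : x ∈ Wbd) (α β : ℝ) (hα : 0 ≤ α) (hαβ : α < β) :
    OT (ENNReal.ofReal α • Measure.dirac x) (ENNReal.ofReal β • Measure.dirac x)
      = ENNReal.ofReal (distDiag x) := by
  classical
  set x' : P2 := (x.1, x.1) with hx'
  have hxWcl : x ∈ Wcl := subset_closure hx
  have hx'Wcl : x' ∈ Wcl := by rw [Wcl_eq]; exact le_refl x.1
  have hx'Diag : x' ∈ Diag := rfl
  have hx'nW : x' ∉ Wbd := lt_irrefl x.1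
  have hWbdopen : IsOpen Wbd := isOpen_lt continuous_fst continuous_snd
  have hβpos : 0 < β := lt_of_le_of_lt hα hαβ
  have hdd0 : (0:ℝ) ≤ distDiag x := Metric.infDist_nonneg
  set μ : Measure P2 := ENNReal.ofReal α • Measure.dirac x with hμ
  set ν : Measure P2 := ENNReal.ofReal β • Measure.dirac x with hν
  apply le_antisymm
  · -- upper bound: explicit coupling
    set p1 : P2 × P2 := (x, x) with hp1
    set p2 : P2 × P2 := (x', x) with hp2
    set π : Measure (P2 × P2) :=
      ENNReal.ofReal α • Measure.dirac p1 + ENNReal.ofReal (β - α) • Measure.dirac p2 with hπdef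
    have pi_apply : ∀ s : Set (P2 × P2),
        π s = (if p1 ∈ s then ENNReal.ofReal α else 0)
            + (if p2 ∈ s then ENNReal.ofReal (β - α) else 0) := by
      intro s
      simp [hπdef, Measure.dirac_apply, Set.indicator_apply, mul_ite]
    have hS : ∀ {a : P2 × P2}, a.1 ∈ Wcl → a.2 ∈ Wcl → a ∈ Wcl ×ˢ Wcl :=
      fun h1 h2 => ⟨h1, h2⟩
    have hp1S : p1 ∈ Wcl ×ˢ Wcl := hS hxWcl hxWcl
    have hp2S : p2 ∈ Wcl ×ˢ Wcl := hS hx'Wcl hxWcl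
    have hcoupling : IsCoupling π μ ν := by
      refine ⟨⟨?_, ?_, ?_, ?_⟩, ?_, ?_⟩
      · rw [pi_apply]
        simp [hp1S, hp2S]
      · intro U hU
        set K : Set (P2 × P2) := {p1, p2} ∩ (U ∩ Wcl ×ˢ Wcl) with hK
        have hKsub : K ⊆ U ∩ Wcl ×ˢ Wcl := inter_subset_right
        have hKcomp : IsCompact K :=
          (((Set.finite_singleton p2).insert p1).inter_of_left _).isCompact
        have hval : π (U ∩ Wcl ×ˢ Wcl) = π K := by
          rw [pi_apply, pi_apply]
          have h1 : p1 ∈ K ↔ p1 ∈ U ∩ Wcl ×ˢ Wcl := by simp [hK]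
          have h2 : p2 ∈ K ↔ p2 ∈ U ∩ Wcl ×ˢ Wcl := by simp [hK]
          simp only [h1, h2]
          all_goals split_ifs <;> rfl
        refine le_antisymm ?_ (iSup₂_le fun K' hK' => iSup_le fun _ => measure_mono hK')
        rw [hval]
        exact le_iSup₂_of_le K hKsub (le_iSup_of_le hKcomp le_rfl)
      · intro E hE hEm
        have hne : p1 ≠ p2 := by
          intro h
          have : x = x' := congrArg Prod.fst h
          exact hx'nW (this ▸ hx)
        set U : Set (P2 × P2) := ({p1} \ E ∪ {p2} \ E)ᶜ with hU
        have hUopen : IsOpen U :=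
          (((Set.finite_singleton p1).diff (t := E)).union
            ((Set.finite_singleton p2).diff (t := E))).isClosed.isOpen_compl
        have hEU : E ⊆ U := by
          intro e he
          simp only [hU, mem_compl_iff, mem_union, mem_diff, mem_singleton_iff]
          push_neg
          exact ⟨fun _ => he, fun _ => he⟩
        have h1 : p1 ∈ U ∩ Wcl ×ˢ Wcl ↔ p1 ∈ E := by
          simp [hU, hp1S, hne]
        have h2 : p2 ∈ U ∩ Wcl ×ˢ Wcl ↔ p2 ∈ E := by
          simp [hU, hp2S, hne.symm]
        have hval : π (U ∩ Wcl ×ˢ Wcl) = π E := by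
          rw [pi_apply, pi_apply]
          simp only [h1, h2]
        refine le_antisymm
          (le_iInf₂ fun V hV => le_iInf fun hEV =>
            measure_mono (subset_inter hEV hE)) ?_
        exact iInf₂_le_of_le U hUopen (iInf_le_of_le hEU (le_of_eq hval))
      · intro K _ _
        refine lt_of_le_of_lt (measure_mono (subset_univ K)) ?_
        rw [pi_apply]
        simp only [mem_univ, if_true]
        exact ENNReal.add_lt_top.2 ⟨ENNReal.ofReal_lt_top, ENNReal.ofReal_lt_top⟩
      · intro A hA hAm
        have h2 : p2 ∉ A ×ˢ Wcl := fun h => hx'nW (hA h.1)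
        have h1iff : p1 ∈ A ×ˢ Wcl ↔ x ∈ A := ⟨fun h => h.1, fun h => ⟨h, hxWcl⟩⟩
        rw [pi_apply, if_neg h2, add_zero, hμ]
        simp only [Measure.smul_apply, Measure.dirac_apply, smul_eq_mul,
          Set.indicator_apply, Pi.one_apply, mul_ite, mul_one, mul_zero, h1iff]
      · intro B hB hBm
        have h1iff : p1 ∈ Wcl ×ˢ B ↔ x ∈ B := ⟨fun h => h.2, fun h => ⟨hxWcl, h⟩⟩
        have h2iff : p2 ∈ Wcl ×ˢ B ↔ x ∈ B := ⟨fun h => h.2, fun h => ⟨hx'Wcl, h⟩⟩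
        have hadd : ENNReal.ofReal α + ENNReal.ofReal (β - α) = ENNReal.ofReal β := by
          rw [← ENNReal.ofReal_add hα (by linarith)]
          norm_num
        rw [pi_apply, hν]
        simp only [Measure.smul_apply, Measure.dirac_apply, smul_eq_mul,
          Set.indicator_apply, Pi.one_apply, mul_ite, mul_one, mul_zero, h1iff, h2iff]
        by_cases hxB : x ∈ B
        · rw [if_pos hxB, if_pos hxB, if_pos hxB, hadd]
        · rw [if_neg hxB, if_neg hxB, if_neg hxB, add_zero]
    have hcost : costInf π ≤ ENNReal.ofReal (distDiag x) := by
      refine iSup₂_le fun p hp => ?_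
      have hpmem : p = p1 ∨ p = p2 := by
        by_contra h
        push_neg at h
        have hUnb : ({p1, p2}ᶜ : Set (P2 × P2)) ∈ 𝓝 p :=
          (((Set.finite_singleton p2).insert p1).isClosed.isOpen_compl).mem_nhds
            (by simp [h.1, h.2])
        have := hp _ hUnb
        rw [pi_apply] at this
        simp at this
      apply ENNReal.ofReal_le_ofReal
      rcases hpmem with h | h <;> subst h
      · show dW x x ≤ distDiag x
        refine le_trans (min_le_left _ _) ?_
        rw [dist_self]
        exact hdd0
      · show dW x' x ≤ distDiag x
        refine le_trans (min_le_right _ _) ?_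
        rw [distDiag, Metric.infDist_zero_of_mem hx'Diag, zero_add]
    exact le_trans (iInf₂_le π hcoupling) hcost
  · -- lower bound
    refine le_iInf fun π => le_iInf fun hπ => ?_
    obtain ⟨⟨hnull, _, _, _⟩, hμm, hνm⟩ := hπ
    have hxs : ((({x} : Set P2)) : Set P2) ⊆ Wbd := singleton_subset_iff.2 hx
    have h1 : π ((({x} : Set P2)) ×ˢ Wcl) = ENNReal.ofReal α := by
      rw [hμm ((({x} : Set P2)) : Set P2) hxs (measurableSet_singleton x), hμ]
      simp [Measure.dirac_apply]
    have h2 : π (Wcl ×ˢ (({x} : Set P2))) = ENNReal.ofReal β := by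
      rw [hνm ((({x} : Set P2)) : Set P2) hxs (measurableSet_singleton x), hν]
      simp [Measure.dirac_apply]
    have h3 : π ((Wbd \ (({x} : Set P2))) ×ˢ Wcl) = 0 := by
      rw [hμm _ diff_subset (hWbdopen.measurableSet.diff (measurableSet_singleton x)), hμ]
      simp [Measure.dirac_apply]
    set D : Set (P2 × P2) := Diag ×ˢ (({x} : Set P2)) with hD
    have hincl : Wcl ×ˢ (({x} : Set P2)) ⊆ ((({x} : Set P2)) ×ˢ Wcl ∪ (Wbd \ (({x} : Set P2))) ×ˢ Wcl) ∪ D := by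
      rintro ⟨a, b⟩ ⟨ha, hb⟩
      have hb' : b = x := hb
      by_cases hax : a = x
      · exact Or.inl (Or.inl ⟨hax, by rw [hb']; exact hxWcl⟩)
      · by_cases haW : a ∈ Wbd
        · exact Or.inl (Or.inr ⟨⟨haW, hax⟩, by rw [hb']; exact hxWcl⟩)
        · refine Or.inr ⟨?_, hb⟩
          have hle : a.1 ≤ a.2 := by rw [Wcl_eq] at ha; exact ha
          exact le_antisymm hle (not_lt.1 haW)
    have hDpos : 0 < π D := by
      by_contra h
      have hD0 : π D = 0 := le_antisymm (not_lt.1 h) zero_le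
      have : ENNReal.ofReal β ≤ ENNReal.ofReal α := by
        calc ENNReal.ofReal β = π (Wcl ×ˢ (({x} : Set P2))) := h2.symm
          _ ≤ π (((({x} : Set P2)) ×ˢ Wcl ∪ (Wbd \ (({x} : Set P2))) ×ˢ Wcl) ∪ D) := measure_mono hincl
          _ ≤ π ((({x} : Set P2)) ×ˢ Wcl ∪ (Wbd \ (({x} : Set P2))) ×ˢ Wcl) + π D := measure_union_le _ _
          _ ≤ (π ((({x} : Set P2)) ×ˢ Wcl) + π ((Wbd \ (({x} : Set P2))) ×ˢ Wcl)) + π D :=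
              add_le_add_left (measure_union_le _ _) _
          _ = ENNReal.ofReal α := by rw [h1, h3, hD0, add_zero, add_zero]
      exact absurd this (not_le.2 ((ENNReal.ofReal_lt_ofReal_iff hβpos).2 hαβ))
    obtain ⟨p, hpD, hpm⟩ : ∃ p ∈ D, p ∈ msupport π := by
      by_contra h
      push_neg at h
      have : D ⊆ (msupport π)ᶜ := fun p hp => h p hp
      exact absurd (measure_mono_null this (msupport_compl_null π)) (ne_of_gt hDpos)
    obtain ⟨hpDiag, hpx⟩ := hpD
    simp only [mem_singleton_iff] at hpx
    have hdd : distDiag x ≤ dW p.1 p.2 := by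
      rw [hpx]
      refine le_min ?_ (le_add_of_nonneg_left Metric.infDist_nonneg)
      rw [dist_comm]
      exact Metric.infDist_le_dist_of_mem hpDiag
    exact le_trans (ENNReal.ofReal_le_ofReal hdd)
      (le_iSup₂ (f := fun (q : P2 × P2) (_ : q ∈ msupport π) =>
        ENNReal.ofReal (dW q.1 q.2)) p hpm)
end
end
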